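/- arXiv:1810.09062 — 4 statements merged into one kernel-verified Lean document; each statement's English description precedes it below -/
import Mathlib

section
/- For any symmetric positive semidefinite n×n matrix A and 1 ≤ k ≤ n, the optimal value of the ℓ1-relaxation satisfies OPT_{ℓ1} ≤ ρ² · λ^k(A) where ρ = 1 + √(k/(k+1)). -/
open Matrix
open scoped Classical

section Aux

variable {n : ℕ} (A : Matrix (Fin n) (Fin n) ℝ)

lemma symmQ (hsymm : A.IsSymm) (u v : Fin n → ℝ) :
    u ⬝ᵥ A.mulVec v = v ⬝ᵥ A.mulVec u := by
  simp only [dotProduct, mulVec, Finset.mul_sum]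
  rw [Finset.sum_comm]
  refine Finset.sum_congr rfl fun i _ => Finset.sum_congr rfl fun j _ => ?_
  rw [hsymm.apply]
  ring

lemma Qexpand (hsymm : A.IsSymm) (u v : Fin n → ℝ) (t : ℝ) :
    (u + t • v) ⬝ᵥ A.mulVec (u + t • v)
      = u ⬝ᵥ A.mulVec u + 2*t*(u ⬝ᵥ A.mulVec v) + t^2*(v ⬝ᵥ A.mulVec v) := by
  simp only [Matrix.mulVec_add, Matrix.mulVec_smul, add_dotProduct,
    dotProduct_add, smul_dotProduct, dotProduct_smul,
    smul_eq_mul]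
  rw [symmQ A hsymm v u]
  ring

lemma psd_nonneg (hpsd : A.PosSemidef) (u : Fin n → ℝ) : 0 ≤ u ⬝ᵥ A.mulVec u := by
  have := hpsd.dotProduct_mulVec_nonneg u
  simpa using this

lemma cauchyQ (hsymm : A.IsSymm) (hpsd : A.PosSemidef) (u v : Fin n → ℝ) :
    (u ⬝ᵥ A.mulVec v)^2 ≤ (u ⬝ᵥ A.mulVec u) * (v ⬝ᵥ A.mulVec v) := by
  set p := u ⬝ᵥ A.mulVec u
  set q := u ⬝ᵥ A.mulVec v
  set r := v ⬝ᵥ A.mulVec v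
  have key : ∀ t : ℝ, 0 ≤ r * (t * t) + (2*q) * t + p := by
    intro t
    have h0 := psd_nonneg A hpsd (u + t • v)
    rw [Qexpand A hsymm u v t] at h0
    nlinarith [h0]
  have := discrim_le_zero key
  rw [discrim] at this
  nlinarith [this]

lemma triangleQ (hsymm : A.IsSymm) (hpsd : A.PosSemidef) (u v : Fin n → ℝ) :
    Real.sqrt ((u + v) ⬝ᵥ A.mulVec (u + v))
      ≤ Real.sqrt (u ⬝ᵥ A.mulVec u) + Real.sqrt (v ⬝ᵥ A.mulVec v) := by
  set p := u ⬝ᵥ A.mulVec u with hp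
  set q := u ⬝ᵥ A.mulVec v with hq
  set r := v ⬝ᵥ A.mulVec v with hr
  have hp0 : 0 ≤ p := psd_nonneg A hpsd u
  have hr0 : 0 ≤ r := psd_nonneg A hpsd v
  have hcs : q^2 ≤ p * r := cauchyQ A hsymm hpsd u v
  have hqle : q ≤ Real.sqrt p * Real.sqrt r := by
    have h1 : q ≤ |q| := le_abs_self q
    have h2 : |q| = Real.sqrt (q^2) := (Real.sqrt_sq_eq_abs q).symm
    have h3 : Real.sqrt (q^2) ≤ Real.sqrt (p*r) := Real.sqrt_le_sqrt hcs
    rw [Real.sqrt_mul hp0] at h3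
    linarith
  have hexp : (u + v) ⬝ᵥ A.mulVec (u + v) = p + 2*q + r := by
    have := Qexpand A hsymm u v 1
    simpa using this
  rw [hexp]
  have hle : p + 2*q + r ≤ (Real.sqrt p + Real.sqrt r)^2 := by
    have h1 : Real.sqrt p ^ 2 = p := Real.sq_sqrt hp0
    have h2 : Real.sqrt r ^ 2 = r := Real.sq_sqrt hr0
    nlinarith [hqle]
  calc Real.sqrt (p + 2*q + r) ≤ Real.sqrt ((Real.sqrt p + Real.sqrt r)^2) :=
        Real.sqrt_le_sqrt hle
    _ = Real.sqrt p + Real.sqrt r := by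
        rw [Real.sqrt_sq (by positivity)]

lemma exists_topk {k : ℕ} (z : Fin n → ℝ) (s : Finset (Fin n)) (hks : k ≤ s.card) :
    ∃ T : Finset (Fin n), T ⊆ s ∧ T.card = k ∧
      ∀ i ∈ T, ∀ j ∈ s, j ∉ T → |z j| ≤ |z i| := by
  classical
  obtain ⟨T0, hT0s, hT0c⟩ := Finset.exists_subset_card_eq hks
  obtain ⟨T, hTmem, hTmax⟩ := Finset.exists_max_image (s.powersetCard k)
    (fun T => ∑ i ∈ T, |z i|)
    ⟨T0, Finset.mem_powersetCard.2 ⟨hT0s, hT0c⟩⟩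
  rw [Finset.mem_powersetCard] at hTmem
  refine ⟨T, hTmem.1, hTmem.2, ?_⟩
  intro i hi j hj hjT
  by_contra hlt
  push_neg at hlt
  have hjei : j ∉ T.erase i := fun h => hjT (Finset.mem_of_mem_erase h)
  have hkpos : 0 < k := hTmem.2 ▸ Finset.card_pos.2 ⟨i, hi⟩
  have hT'card : (insert j (T.erase i)).card = k := by
    rw [Finset.card_insert_of_notMem hjei, Finset.card_erase_of_mem hi, hTmem.2]
    omega
  have hT'sub : insert j (T.erase i) ⊆ s := by
    intro a ha
    rcases Finset.mem_insert.1 ha with rfl | h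
    · exact hj
    · exact hTmem.1 (Finset.mem_of_mem_erase h)
  have hmem' : insert j (T.erase i) ∈ s.powersetCard k :=
    Finset.mem_powersetCard.2 ⟨hT'sub, hT'card⟩
  have hle := hTmax _ hmem'
  rw [Finset.sum_insert hjei] at hle
  have herase : (∑ i' ∈ T.erase i, |z i'|) + |z i| = ∑ i' ∈ T, |z i'| :=
    Finset.sum_erase_add T _ hi
  simp only at hle herase
  linarith

end Aux

section Key

variable {n : ℕ} (A : Matrix (Fin n) (Fin n) ℝ)

lemma amgm_sqrt (a b : ℝ) (ha : 0 ≤ a) (hb : 0 ≤ b) :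
    Real.sqrt (a * b) ≤ (a + b) / 2 := by
  have h1 : Real.sqrt a ^ 2 = a := Real.sq_sqrt ha
  have h2 : Real.sqrt b ^ 2 = b := Real.sq_sqrt hb
  rw [Real.sqrt_mul ha]
  nlinarith [sq_nonneg (Real.sqrt a - Real.sqrt b), Real.sqrt_nonneg a, Real.sqrt_nonneg b]

lemma sum_restrict {n : ℕ} (T : Finset (Fin n)) (f : Fin n → ℝ) :
    ∑ i, (if i ∈ T then f i else 0) = ∑ i ∈ T, f i := by
  rw [Finset.sum_ite_mem, Finset.univ_inter]

lemma keyF (k : ℕ) (hk1 : 1 ≤ k) (hn : 1 ≤ n)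
    (hsymm : A.IsSymm) (hpsd : A.PosSemidef) (lam : ℝ) (hlam0 : 0 ≤ lam)
    (hsparse : ∀ w : Fin n → ℝ, (Finset.univ.filter fun i => w i ≠ 0).card ≤ k →
      w ⬝ᵥ A.mulVec w ≤ lam * ∑ i, (w i)^2) :
    ∀ N : ℕ, ∀ z : Fin n → ℝ, (Finset.univ.filter fun i => z i ≠ 0).card ≤ N →
      ∀ m : ℝ, (∀ i, |z i| ≤ m) →
      Real.sqrt (z ⬝ᵥ A.mulVec z)
        ≤ Real.sqrt lam * (Real.sqrt k * m / 2 + (∑ i, |z i|) / Real.sqrt k) := by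
  have hkR : (0:ℝ) < (k:ℝ) := by exact_mod_cast hk1
  set sk := Real.sqrt (k:ℝ) with hsk
  have hsk2 : sk^2 = (k:ℝ) := Real.sq_sqrt hkR.le
  have hsk0 : 0 < sk := Real.sqrt_pos.2 hkR
  intro N
  induction N with
  | zero =>
      intro z hcard m hm
      have hz : z = 0 := by
        funext i
        simp only [Pi.zero_apply]
        by_contra hzi
        have hmem : i ∈ Finset.univ.filter fun i => z i ≠ 0 := by simp [hzi]
        have := Finset.card_pos.2 ⟨i, hmem⟩
        omega
      subst hz
      have hm0 : 0 ≤ m := le_trans (abs_nonneg _) (hm ⟨0, hn⟩)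
      simp only [Matrix.mulVec_zero, dotProduct_zero, Real.sqrt_zero, Pi.zero_apply,
        abs_zero, Finset.sum_const_zero, zero_div, add_zero]
      positivity
  | succ N ih =>
      intro z hcard m hm
      have hm0 : 0 ≤ m := le_trans (abs_nonneg _) (hm ⟨0, hn⟩)
      set supp := Finset.univ.filter fun i => z i ≠ 0 with hsupp
      by_cases hsmall : supp.card ≤ k
      · -- base case: z is k-sparse
        have h1 : z ⬝ᵥ A.mulVec z ≤ lam * ∑ i, (z i)^2 := hsparse z hsmall
        have hsum : ∑ i, (z i)^2 ≤ m * ∑ i, |z i| := by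
          rw [Finset.mul_sum]
          refine Finset.sum_le_sum fun i _ => ?_
          have h : (z i)^2 = |z i| * |z i| := by rw [← sq_abs]; ring
          rw [h]
          exact mul_le_mul_of_nonneg_right (hm i) (abs_nonneg _)
        have habs0 : 0 ≤ ∑ i, |z i| := Finset.sum_nonneg fun i _ => abs_nonneg _
        have hab : m * ∑ i, |z i| = (sk * m) * ((∑ i, |z i|) / sk) := by
          field_simp
        calc Real.sqrt (z ⬝ᵥ A.mulVec z)
            ≤ Real.sqrt (lam * (m * ∑ i, |z i|)) := by
              apply Real.sqrt_le_sqrt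
              calc z ⬝ᵥ A.mulVec z ≤ lam * ∑ i, (z i)^2 := h1
                _ ≤ lam * (m * ∑ i, |z i|) := mul_le_mul_of_nonneg_left hsum hlam0
          _ = Real.sqrt lam * Real.sqrt (m * ∑ i, |z i|) := Real.sqrt_mul hlam0 _
          _ ≤ Real.sqrt lam * ((sk * m + (∑ i, |z i|) / sk) / 2) := by
              apply mul_le_mul_of_nonneg_left _ (Real.sqrt_nonneg _)
              rw [hab]
              exact amgm_sqrt _ _ (by positivity) (by positivity)
          _ ≤ Real.sqrt lam * (sk * m / 2 + (∑ i, |z i|) / sk) := by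
              apply mul_le_mul_of_nonneg_left _ (Real.sqrt_nonneg _)
              have : 0 ≤ (∑ i, |z i|) / sk := by positivity
              linarith
      · -- inductive step
        push_neg at hsmall
        obtain ⟨T, hTs, hTc, hTmin⟩ := exists_topk (k := k) z supp hsmall.le
        set zT : Fin n → ℝ := fun i => if i ∈ T then z i else 0 with hzT
        set zC : Fin n → ℝ := fun i => if i ∈ T then 0 else z i with hzC
        have hsplit : z = zT + zC := by
          funext i; by_cases h : i ∈ T <;> simp [hzT, hzC, h]
        set P := ∑ i ∈ T, |z i| with hP
        have hP0 : 0 ≤ P := Finset.sum_nonneg fun i _ => abs_nonneg _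
        -- ℓ1 sums
        have hsumT : (∑ i, |zT i|) = P := by
          rw [hP, ← sum_restrict T (fun i => |z i|)]
          refine Finset.sum_congr rfl fun i _ => ?_
          by_cases h : i ∈ T <;> simp [hzT, h]
        have hsumC : (∑ i, |zC i|) = (∑ i, |z i|) - P := by
          have : (∑ i, |z i|) = (∑ i, |zT i|) + (∑ i, |zC i|) := by
            rw [← Finset.sum_add_distrib]
            refine Finset.sum_congr rfl fun i _ => ?_
            by_cases h : i ∈ T <;> simp [hzT, hzC, h]
          rw [hsumT] at this
          linarith
        -- zT is k-sparse
        have hsuppT : (Finset.univ.filter fun i => zT i ≠ 0).card ≤ k := by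
          rw [← hTc]
          apply Finset.card_le_card
          intro i hi
          rw [Finset.mem_filter] at hi
          by_contra h
          simp [hzT, h] at hi
        -- sum of squares of zT
        have hsqT : ∑ i, (zT i)^2 ≤ m * P := by
          have h1 : (∑ i, (zT i)^2) = ∑ i ∈ T, (z i)^2 := by
            rw [← sum_restrict T (fun i => (z i)^2)]
            refine Finset.sum_congr rfl fun i _ => ?_
            by_cases h : i ∈ T <;> simp [hzT, h]
          rw [h1, hP, Finset.mul_sum]
          refine Finset.sum_le_sum fun i _ => ?_
          have h : (z i)^2 = |z i| * |z i| := by rw [← sq_abs]; ring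
          rw [h]
          exact mul_le_mul_of_nonneg_right (hm i) (abs_nonneg _)
        -- bound on zT form
        have hQT : Real.sqrt (zT ⬝ᵥ A.mulVec zT) ≤ Real.sqrt lam * ((sk * m + P / sk) / 2) := by
          have h1 : zT ⬝ᵥ A.mulVec zT ≤ lam * (m * P) := by
            calc zT ⬝ᵥ A.mulVec zT ≤ lam * ∑ i, (zT i)^2 := hsparse zT hsuppT
              _ ≤ lam * (m * P) := mul_le_mul_of_nonneg_left hsqT hlam0
          have hab : m * P = (sk * m) * (P / sk) := by field_simp
          calc Real.sqrt (zT ⬝ᵥ A.mulVec zT) ≤ Real.sqrt (lam * (m * P)) :=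
                Real.sqrt_le_sqrt h1
            _ = Real.sqrt lam * Real.sqrt (m * P) := Real.sqrt_mul hlam0 _
            _ ≤ Real.sqrt lam * ((sk * m + P / sk) / 2) := by
                apply mul_le_mul_of_nonneg_left _ (Real.sqrt_nonneg _)
                rw [hab]
                exact amgm_sqrt _ _ (by positivity) (by positivity)
        -- entrywise bound on zC
        have hmC : ∀ i, |zC i| ≤ P / k := by
          intro i
          by_cases h : i ∈ T
          · simp only [hzC, h, if_true, abs_zero]
            positivity
          · have hzCi : zC i = z i := by simp [hzC, h]
            rw [hzCi]
            by_cases hz : z i = 0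
            · rw [hz, abs_zero]; positivity
            · have hiS : i ∈ supp := by simp [hsupp, hz]
              have hbound : ∀ t ∈ T, |z i| ≤ |z t| := fun t ht => hTmin t ht i hiS h
              have : (k:ℝ) * |z i| ≤ P := by
                rw [hP]
                calc (k:ℝ) * |z i| = ∑ _t ∈ T, |z i| := by
                      rw [Finset.sum_const, hTc, nsmul_eq_mul]
                  _ ≤ ∑ t ∈ T, |z t| := Finset.sum_le_sum hbound
              rw [le_div_iff₀ hkR]
              linarith
        -- support of zC is strictly smaller
        have hsuppC : (Finset.univ.filter fun i => zC i ≠ 0).card ≤ N := by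
          have hsub : (Finset.univ.filter fun i => zC i ≠ 0) = supp \ T := by
            ext i
            constructor
            · intro h
              have hzC' : zC i ≠ 0 := (Finset.mem_filter.1 h).2
              have hi : i ∉ T := by intro hi; exact hzC' (by simp [hzC, hi])
              have hz : z i ≠ 0 := by simpa [hzC, hi] using hzC'
              exact Finset.mem_sdiff.2
                ⟨Finset.mem_filter.2 ⟨Finset.mem_univ _, hz⟩, hi⟩
            · intro h
              obtain ⟨h1, h2⟩ := Finset.mem_sdiff.1 h
              have hz : z i ≠ 0 := (Finset.mem_filter.1 h1).2
              exact Finset.mem_filter.2 ⟨Finset.mem_univ _, by simpa [hzC, h2] using hz⟩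
          rw [hsub, Finset.card_sdiff_of_subset hTs, hTc]
          omega
        have hIH := ih zC hsuppC (P / k) hmC
        -- combine
        have htri : Real.sqrt (z ⬝ᵥ A.mulVec z)
            ≤ Real.sqrt (zT ⬝ᵥ A.mulVec zT) + Real.sqrt (zC ⬝ᵥ A.mulVec zC) := by
          conv_lhs => rw [hsplit]
          exact triangleQ A hsymm hpsd zT zC
        rw [hsumC] at hIH
        have hPk : sk * (P / (k:ℝ)) = P / sk := by
          rw [eq_div_iff hsk0.ne']
          field_simp
          linear_combination P * hsk2
        have halg : Real.sqrt lam * ((sk * m + P / sk) / 2)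
            + Real.sqrt lam * (sk * (P / k) / 2 + ((∑ i, |z i|) - P) / sk)
            = Real.sqrt lam * (sk * m / 2 + (∑ i, |z i|) / sk) := by
          rw [hPk]
          ring
        calc Real.sqrt (z ⬝ᵥ A.mulVec z)
            ≤ Real.sqrt (zT ⬝ᵥ A.mulVec zT) + Real.sqrt (zC ⬝ᵥ A.mulVec zC) := htri
          _ ≤ Real.sqrt lam * ((sk * m + P / sk) / 2)
              + Real.sqrt lam * (sk * (P / k) / 2 + ((∑ i, |z i|) - P) / sk) := by
              exact add_le_add hQT hIH
          _ = Real.sqrt lam * (sk * m / 2 + (∑ i, |z i|) / sk) := halg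


end Key

set_option maxHeartbeats 1600000 in
theorem stmt2 (n k : ℕ) (hk1 : 1 ≤ k) (hkn : k ≤ n)
    (A : Matrix (Fin n) (Fin n) ℝ) (hsymm : A.IsSymm) (hpsd : A.PosSemidef) :
    sSup {val : ℝ | ∃ x : Fin n → ℝ, Real.sqrt (∑ i, x i ^ 2) ≤ 1 ∧
        (∑ i, |x i|) ≤ Real.sqrt k ∧ val = x ⬝ᵥ A.mulVec x} ≤
    (1 + Real.sqrt ((k : ℝ) / (k + 1))) ^ 2 *
      sSup {val : ℝ | ∃ x : Fin n → ℝ, Real.sqrt (∑ i, x i ^ 2) = 1 ∧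
        (Finset.univ.filter fun i => x i ≠ 0).card ≤ k ∧ val = x ⬝ᵥ A.mulVec x} := by
  have hn : 1 ≤ n := le_trans hk1 hkn
  have hkR : (0:ℝ) < (k:ℝ) := by exact_mod_cast hk1
  set sk := Real.sqrt (k:ℝ) with hsk
  have hsk2 : sk^2 = (k:ℝ) := Real.sq_sqrt hkR.le
  have hsk0 : 0 < sk := Real.sqrt_pos.2 hkR
  have hk1R : (1:ℝ) ≤ (k:ℝ) := by exact_mod_cast hk1
  have hsk1 : 1 ≤ sk := by
    rw [hsk, show (1:ℝ) = Real.sqrt 1 by simp]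
    exact Real.sqrt_le_sqrt hk1R
  set S2 := {val : ℝ | ∃ x : Fin n → ℝ, Real.sqrt (∑ i, x i ^ 2) = 1 ∧
        (Finset.univ.filter fun i => x i ≠ 0).card ≤ k ∧ val = x ⬝ᵥ A.mulVec x} with hS2
  set lam := sSup S2 with hlam
  -- S2 is bounded above
  have hbdd : BddAbove S2 := by
    refine ⟨∑ i, ∑ j, |A i j|, ?_⟩
    rintro val ⟨x, hx2, _, rfl⟩
    have hsum1 : ∑ i, x i ^ 2 = 1 := by
      have h0 : 0 ≤ ∑ i, x i ^ 2 := Finset.sum_nonneg fun i _ => sq_nonneg _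
      nlinarith [Real.sq_sqrt h0, hx2, Real.sqrt_nonneg (∑ i, x i ^ 2)]
    have hxi : ∀ i, |x i| ≤ 1 := by
      intro i
      have h1 : x i ^ 2 ≤ 1 := by
        have h := Finset.single_le_sum (f := fun i => x i ^ 2)
          (fun i _ => sq_nonneg (x i)) (Finset.mem_univ i)
        linarith [hsum1]
      nlinarith [abs_nonneg (x i), sq_abs (x i)]
    calc x ⬝ᵥ A.mulVec x = ∑ i, ∑ j, x i * (A i j * x j) := by
          simp [dotProduct, mulVec, Finset.mul_sum]
      _ ≤ ∑ i, ∑ j, |A i j| := by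
          refine Finset.sum_le_sum fun i _ => Finset.sum_le_sum fun j _ => ?_
          calc x i * (A i j * x j) ≤ |x i * (A i j * x j)| := le_abs_self _
            _ = |x i| * |A i j| * |x j| := by rw [abs_mul, abs_mul]; ring
            _ ≤ 1 * |A i j| * 1 := by
                apply mul_le_mul (mul_le_mul (hxi i) le_rfl (abs_nonneg _) zero_le_one)
                  (hxi j) (abs_nonneg _) (by positivity)
            _ = |A i j| := by ring
  -- sparse quadratic form bound
  have hsparse : ∀ w : Fin n → ℝ, (Finset.univ.filter fun i => w i ≠ 0).card ≤ k →
      w ⬝ᵥ A.mulVec w ≤ lam * ∑ i, (w i)^2 := by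
    intro w hw
    by_cases hw0 : w = 0
    · subst hw0
      simp
    · have hpos : 0 < ∑ i, w i ^ 2 := by
        obtain ⟨i, hi⟩ := Function.ne_iff.1 hw0
        simp only [Pi.zero_apply] at hi
        have hwi : (0:ℝ) < w i ^ 2 := by positivity
        have hle := Finset.single_le_sum (f := fun i => w i ^ 2)
          (fun i _ => sq_nonneg (w i)) (Finset.mem_univ i)
        linarith
      set c := Real.sqrt (∑ i, w i ^ 2) with hc
      have hc0 : 0 < c := Real.sqrt_pos.2 hpos
      have hc2 : c^2 = ∑ i, w i ^ 2 := Real.sq_sqrt hpos.le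
      set u : Fin n → ℝ := fun i => c⁻¹ * w i with hu
      have hu2 : Real.sqrt (∑ i, u i ^ 2) = 1 := by
        have : ∑ i, u i ^ 2 = 1 := by
          simp only [hu, mul_pow, ← Finset.mul_sum]
          rw [← hc2]
          field_simp
        rw [this, Real.sqrt_one]
      have husupp : (Finset.univ.filter fun i => u i ≠ 0).card ≤ k := by
        have : (Finset.univ.filter fun i => u i ≠ 0)
            = (Finset.univ.filter fun i => w i ≠ 0) := by
          ext i
          simp only [Finset.mem_filter, Finset.mem_univ, true_and, hu]
          constructor
          · intro h hwi; exact h (by rw [hwi, mul_zero])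
          · intro h hc'; exact h (by
              have := mul_ne_zero (inv_ne_zero hc0.ne') h
              exact absurd hc' this)
        rw [this]; exact hw
      have hmem : u ⬝ᵥ A.mulVec u ∈ S2 := ⟨u, hu2, husupp, rfl⟩
      have hle : u ⬝ᵥ A.mulVec u ≤ lam := le_csSup hbdd hmem
      have hQu : u ⬝ᵥ A.mulVec u = c⁻¹^2 * (w ⬝ᵥ A.mulVec w) := by
        have : u = c⁻¹ • w := by funext i; simp [hu]
        rw [this]
        rw [smul_dotProduct, Matrix.mulVec_smul, dotProduct_smul]
        simp [smul_eq_mul]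
        ring
      rw [hQu] at hle
      have : w ⬝ᵥ A.mulVec w ≤ c^2 * lam := by
        have h2 := mul_le_mul_of_nonneg_left hle (sq_nonneg c)
        have hcc : c^2 * (c⁻¹^2 * (w ⬝ᵥ A.mulVec w)) = w ⬝ᵥ A.mulVec w := by
          field_simp
        rw [hcc] at h2
        exact h2
      rw [hc2] at this
      linarith [this]
  -- lam ≥ 0
  have hlam0 : 0 ≤ lam := by
    set e : Fin n → ℝ := fun i => if i = ⟨0, hn⟩ then 1 else 0 with he
    have hcard : (Finset.univ.filter fun i => e i ≠ 0).card ≤ k := by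
      have : (Finset.univ.filter fun i => e i ≠ 0) = {⟨0, hn⟩} := by
        ext i
        simp only [Finset.mem_filter, Finset.mem_univ, true_and, Finset.mem_singleton, he]
        constructor
        · intro h; by_contra hne; exact h (by simp [hne])
        · intro h; subst h; simp
      rw [this, Finset.card_singleton]
      omega
    have h1 := hsparse e hcard
    have h2 : 0 ≤ e ⬝ᵥ A.mulVec e := psd_nonneg A hpsd e
    have h3 : ∑ i, e i ^ 2 = 1 := by
      simp only [he]
      rw [Finset.sum_congr rfl (g := fun i => if i = ⟨0, hn⟩ then (1:ℝ) else 0)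
        (fun i _ => by split <;> simp_all)]
      simp
    rw [h3, mul_one] at h1
    linarith
  -- main bound
  set rho := 1 + Real.sqrt ((k : ℝ) / (k + 1)) with hrho
  have hrho0 : 0 ≤ rho := by positivity
  have hc_le_rho : 2 - 1/(2*sk) ≤ rho := by
    set u := Real.sqrt ((k : ℝ) / (k + 1)) with huu
    have hu0 : 0 ≤ u := Real.sqrt_nonneg _
    have hu2 : u^2 = (k:ℝ)/(k+1) := Real.sq_sqrt (by positivity)
    have hL0 : 0 ≤ 1 - 1/(2*sk) := by
      have h12 : 1/(2*sk) ≤ 1/2 := one_div_le_one_div_of_le two_pos (by linarith)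
      linarith
    have key : (2*sk-1)^2*(sk^2+1) ≤ 4*sk^2*sk^2 := by
      nlinarith [mul_nonneg (sub_nonneg.2 hsk1)
        (show (0:ℝ) ≤ 4*sk^2 - sk + 1 by nlinarith [sq_nonneg sk, hsk0, hsk1]), hsk0, hsk1]
    have hsq : (1 - 1/(2*sk))^2 ≤ u^2 := by
      rw [hu2]
      rw [le_div_iff₀ (by positivity)]
      rw [← hsk2]
      have heq : (1 - 1/(2*sk)) = (2*sk-1)/(2*sk) := by field_simp
      rw [heq, div_pow, div_mul_eq_mul_div, div_le_iff₀ (by positivity)]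
      exact key.trans_eq (by ring)
    have : 1 - 1/(2*sk) ≤ u := by
      have h := Real.sqrt_le_sqrt hsq
      rwa [Real.sqrt_sq hL0, Real.sqrt_sq hu0] at h
    rw [hrho]
    linarith
  -- apply csSup_le
  apply csSup_le
  · refine ⟨0, 0, by simp, ?_, by simp⟩
    simp only [Pi.zero_apply, abs_zero, Finset.sum_const_zero]
    exact hsk0.le
  rintro val ⟨x, hx2, hx1, rfl⟩
  -- split x via top-k
  have hcardU : k ≤ (Finset.univ : Finset (Fin n)).card := by
    simp [hkn]
  obtain ⟨T, _, hTc, hTmin⟩ := exists_topk (k := k) x Finset.univ hcardU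
  set y : Fin n → ℝ := fun i => if i ∈ T then x i else 0 with hy
  set z : Fin n → ℝ := fun i => if i ∈ T then 0 else x i with hz
  have hsplit : x = y + z := by
    funext i; by_cases h : i ∈ T <;> simp [hy, hz, h]
  set L := ∑ i ∈ T, |x i| with hL
  have hL0 : 0 ≤ L := Finset.sum_nonneg fun i _ => abs_nonneg _
  set X1 := ∑ i, |x i| with hX1
  have hX1L : ∑ i, |z i| = X1 - L := by
    have h1 : (∑ i, |y i|) = L := by
      rw [hL, ← sum_restrict T (fun i => |x i|)]
      refine Finset.sum_congr rfl fun i _ => ?_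
      by_cases h : i ∈ T <;> simp [hy, h]
    have h2 : X1 = (∑ i, |y i|) + (∑ i, |z i|) := by
      rw [hX1, ← Finset.sum_add_distrib]
      refine Finset.sum_congr rfl fun i _ => ?_
      by_cases h : i ∈ T <;> simp [hy, hz, h]
    rw [h1] at h2
    linarith
  -- y is k-sparse
  have hsuppY : (Finset.univ.filter fun i => y i ≠ 0).card ≤ k := by
    rw [← hTc]
    apply Finset.card_le_card
    intro i hi
    rw [Finset.mem_filter] at hi
    by_contra h
    simp [hy, h] at hi
  set ty := Real.sqrt (∑ i, y i ^ 2) with hty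
  have hty0 : 0 ≤ ty := Real.sqrt_nonneg _
  have hsumy : ∑ i, y i ^ 2 ≤ ∑ i, x i ^ 2 := by
    refine Finset.sum_le_sum fun i _ => ?_
    by_cases h : i ∈ T <;> simp [hy, h] <;> positivity
  have hx2sum : ∑ i, x i ^ 2 ≤ 1 := by
    have h0 : 0 ≤ ∑ i, x i ^ 2 := Finset.sum_nonneg fun i _ => sq_nonneg _
    nlinarith [Real.sq_sqrt h0, hx2, Real.sqrt_nonneg (∑ i, x i ^ 2)]
  have hty1 : ty ≤ 1 := by
    rw [hty]
    rw [show (1:ℝ) = Real.sqrt 1 by simp]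
    exact Real.sqrt_le_sqrt (le_trans hsumy hx2sum)
  have htyL : ty ≤ L := by
    have hyL : ∀ i, |y i| ≤ L := by
      intro i
      by_cases h : i ∈ T
      · have : |y i| = |x i| := by simp [hy, h]
        rw [this, hL]
        exact Finset.single_le_sum (f := fun i => |x i|) (fun i _ => abs_nonneg _) h
      · simp [hy, h]; exact hL0
    have hsq : ∑ i, y i ^ 2 ≤ L^2 := by
      have h1 : (∑ i, y i ^ 2) = ∑ i ∈ T, x i ^ 2 := by
        rw [← sum_restrict T (fun i => x i ^ 2)]
        refine Finset.sum_congr rfl fun i _ => ?_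
        by_cases h : i ∈ T <;> simp [hy, h]
      rw [h1]
      calc ∑ i ∈ T, x i ^ 2 ≤ ∑ i ∈ T, L * |x i| := by
            refine Finset.sum_le_sum fun i hi => ?_
            have h : x i ^ 2 = |x i| * |x i| := by rw [← sq_abs]; ring
            rw [h]
            apply mul_le_mul_of_nonneg_right _ (abs_nonneg _)
            rw [hL]
            exact Finset.single_le_sum (f := fun i => |x i|) (fun i _ => abs_nonneg _) hi
        _ = L * L := by rw [← Finset.mul_sum, ← hL]
        _ = L^2 := by ring
    rw [hty]
    calc Real.sqrt (∑ i, y i ^ 2) ≤ Real.sqrt (L^2) := Real.sqrt_le_sqrt hsq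
      _ = L := Real.sqrt_sq hL0
  -- bound on y form
  have hQy : Real.sqrt (y ⬝ᵥ A.mulVec y) ≤ Real.sqrt lam * ty := by
    have h1 : y ⬝ᵥ A.mulVec y ≤ lam * ∑ i, y i ^ 2 := hsparse y hsuppY
    calc Real.sqrt (y ⬝ᵥ A.mulVec y) ≤ Real.sqrt (lam * ∑ i, y i ^ 2) :=
          Real.sqrt_le_sqrt h1
      _ = Real.sqrt lam * ty := by rw [Real.sqrt_mul hlam0, hty]
  -- entrywise bound on z
  have hmz : ∀ i, |z i| ≤ L / k := by
    intro i
    by_cases h : i ∈ T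
    · simp only [hz, h, if_true, abs_zero]; positivity
    · have hzi : z i = x i := by simp [hz, h]
      rw [hzi]
      have hbound : ∀ t ∈ T, |x i| ≤ |x t| := fun t ht =>
        hTmin t ht i (Finset.mem_univ i) h
      have hkk : (k:ℝ) * |x i| ≤ L := by
        rw [hL]
        calc (k:ℝ) * |x i| = ∑ _t ∈ T, |x i| := by
              rw [Finset.sum_const, hTc, nsmul_eq_mul]
          _ ≤ ∑ t ∈ T, |x t| := Finset.sum_le_sum hbound
      rw [le_div_iff₀ hkR]
      linarith
  have hsuppZ : (Finset.univ.filter fun i => z i ≠ 0).card ≤ n := by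
    calc (Finset.univ.filter fun i => z i ≠ 0).card
        ≤ (Finset.univ : Finset (Fin n)).card := Finset.card_le_card (Finset.filter_subset _ _)
      _ = n := by simp
  have hQz := keyF A k hk1 hn hsymm hpsd lam hlam0 hsparse n z hsuppZ (L/k) hmz
  rw [hX1L, ← hsk] at hQz
  -- combine
  have htri : Real.sqrt (x ⬝ᵥ A.mulVec x)
      ≤ Real.sqrt (y ⬝ᵥ A.mulVec y) + Real.sqrt (z ⬝ᵥ A.mulVec z) := by
    conv_lhs => rw [hsplit]
    exact triangleQ A hsymm hpsd y z
  have hPk : sk * (L / (k:ℝ)) = L / sk := by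
    rw [eq_div_iff hsk0.ne']
    field_simp
    linear_combination L * hsk2
  have hscalar : ty + (sk * (L/k) / 2 + (X1 - L) / sk) ≤ 2 - 1/(2*sk) := by
    rw [hPk]
    have hX1sk : X1 ≤ sk := hx1
    have h2sk : (0:ℝ) < 2 * sk := by linarith
    have hXL0 : 0 ≤ X1 - L := by
      have := hX1L
      have h0 : 0 ≤ ∑ i, |z i| := Finset.sum_nonneg fun i _ => abs_nonneg _
      linarith
    rw [show ty + (L / sk / 2 + (X1 - L) / sk)
        = (2 * sk * ty + L + 2 * (X1 - L)) / (2 * sk) by field_simp; ring]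
    rw [div_le_iff₀ h2sk]
    have hexp : (2 - 1/(2*sk)) * (2 * sk) = 4 * sk - 1 := by field_simp; ring
    rw [hexp]
    nlinarith [mul_nonneg (sub_nonneg.2 hty1) (by linarith : (0:ℝ) ≤ 2*sk - 1), htyL, hX1sk]
  have hchain : Real.sqrt (x ⬝ᵥ A.mulVec x) ≤ Real.sqrt lam * (2 - 1/(2*sk)) := by
    calc Real.sqrt (x ⬝ᵥ A.mulVec x)
        ≤ Real.sqrt (y ⬝ᵥ A.mulVec y) + Real.sqrt (z ⬝ᵥ A.mulVec z) := htri
      _ ≤ Real.sqrt lam * ty + Real.sqrt lam * (sk * (L/k) / 2 + (X1 - L) / sk) :=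
          add_le_add hQy hQz
      _ = Real.sqrt lam * (ty + (sk * (L/k) / 2 + (X1 - L) / sk)) := by ring
      _ ≤ Real.sqrt lam * (2 - 1/(2*sk)) :=
          mul_le_mul_of_nonneg_left hscalar (Real.sqrt_nonneg _)
  -- finish
  have hc0 : 0 ≤ 2 - 1/(2*sk) := by
    have : 1/(2*sk) ≤ 1 := by
      rw [div_le_one (by linarith)]
      linarith
    linarith
  have hQx0 : 0 ≤ x ⬝ᵥ A.mulVec x := psd_nonneg A hpsd x
  calc x ⬝ᵥ A.mulVec x = Real.sqrt (x ⬝ᵥ A.mulVec x) ^ 2 := (Real.sq_sqrt hQx0).symm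
    _ ≤ (Real.sqrt lam * (2 - 1/(2*sk)))^2 := by
        apply pow_le_pow_left₀ (Real.sqrt_nonneg _) hchain
    _ ≤ (Real.sqrt lam * rho)^2 := by
        apply pow_le_pow_left₀ (by positivity)
        exact mul_le_mul_of_nonneg_left hc_le_rho (Real.sqrt_nonneg _)
    _ = rho^2 * lam := by
        rw [mul_pow, Real.sq_sqrt hlam0]
        ring
end

section
/- The set T_k = {x ∈ R^n : ||x||_2 ≤ 1, ||x||_1 ≤ √k} is contained in ρ · conv(S_k), where S_k = {x ∈ R^n : ||x||_2 ≤ 1, ||x||_0 ≤ k} and ρ = 1 + √(k/(k+1)). -/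
open scoped Classical Pointwise

lemma lemA (n m : ℕ) (d : ℕ) : ∀ w : Fin n → ℝ,
    (Finset.univ.filter fun i => 0 < w i ∧ w i < 1).card ≤ d →
    (∀ i, 0 ≤ w i) → (∀ i, w i ≤ 1) → (∑ i, w i) ≤ m →
    w ∈ convexHull ℝ {u : Fin n → ℝ | (∀ i, 0 ≤ u i ∧ u i ≤ 1) ∧
      (Finset.univ.filter fun i => u i ≠ 0).card ≤ m} := by
  induction d with
  | zero =>
    intro w hfrac h0 h1 hsum
    apply subset_convexHull
    refine ⟨fun i => ⟨h0 i, h1 i⟩, ?_⟩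
    -- every nonzero coordinate is = 1, so card = sum ≤ m
    have hone : ∀ i, w i ≠ 0 → w i = 1 := by
      intro i hi
      by_contra hne
      have : i ∈ Finset.univ.filter fun i => 0 < w i ∧ w i < 1 := by
        simp only [Finset.mem_filter, Finset.mem_univ, true_and]
        exact ⟨lt_of_le_of_ne (h0 i) (Ne.symm hi), lt_of_le_of_ne (h1 i) hne⟩
      have := Finset.card_pos.mpr ⟨i, this⟩
      omega
    have : ((Finset.univ.filter fun i => w i ≠ 0).card : ℝ) ≤ (m : ℝ) := by
      calc ((Finset.univ.filter fun i => w i ≠ 0).card : ℝ)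
          = ∑ i ∈ Finset.univ.filter fun i => w i ≠ 0, w i := by
            rw [Finset.sum_congr rfl (fun i hi => hone i (Finset.mem_filter.mp hi).2)]
            simp
        _ ≤ ∑ i, w i := Finset.sum_le_sum_of_subset_of_nonneg (Finset.filter_subset _ _)
            (fun i _ _ => h0 i)
        _ ≤ m := hsum
    exact_mod_cast this
  | succ d ih =>
    intro w hfrac h0 h1 hsum
    by_cases hcard : (Finset.univ.filter fun i => w i ≠ 0).card ≤ m
    · exact subset_convexHull _ _ ⟨fun i => ⟨h0 i, h1 i⟩, hcard⟩
    push_neg at hcard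
    set frac := Finset.univ.filter fun i => 0 < w i ∧ w i < 1 with hfracdef
    set supp := Finset.univ.filter fun i => w i ≠ 0 with hsuppdef
    have hfs : frac ⊆ supp := by
      intro i hi
      simp only [hfracdef, hsuppdef, Finset.mem_filter, Finset.mem_univ, true_and] at *
      exact ne_of_gt hi.1
    -- there are at least two fractional coordinates
    have h2 : 2 ≤ frac.card := by
      by_contra hlt
      push_neg at hlt
      have hfr1 : frac.card ≤ 1 := by omega
      have hsplit : ∑ i ∈ supp, w i = ∑ i ∈ supp \ frac, w i + ∑ i ∈ frac, w i :=
        (Finset.sum_sdiff hfs).symm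
      have hones : ∑ i ∈ supp \ frac, w i = ((supp \ frac).card : ℝ) := by
        rw [Finset.sum_congr rfl (fun i hi => ?_), Finset.sum_const, nsmul_eq_mul, mul_one]
        have hi' := Finset.mem_sdiff.mp hi
        have hi1 := hi'.1
        have hi2 := hi'.2
        simp only [hsuppdef, Finset.mem_filter, Finset.mem_univ, true_and] at hi1
        simp only [hfracdef, Finset.mem_filter, Finset.mem_univ, true_and] at hi2
        push_neg at hi2
        have := hi2 (lt_of_le_of_ne (h0 i) (Ne.symm hi1))
        linarith [h1 i]
      have hcardsd : (supp \ frac).card = supp.card - frac.card :=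
        Finset.card_sdiff_of_subset hfs
      have hfracsum : ((frac.card : ℝ) - 1) < ∑ i ∈ frac, w i := by
        interval_cases h : frac.card
        · rw [Finset.card_eq_zero.mp h]
          simp
        · obtain ⟨i0, hi0⟩ := Finset.card_eq_one.mp h
          rw [hi0, Finset.sum_singleton]
          have : i0 ∈ frac := by rw [hi0]; exact Finset.mem_singleton_self i0
          simp only [hfracdef, Finset.mem_filter] at this
          push_cast
          linarith [this.2.1]
      have hsub : ∑ i ∈ supp, w i ≤ ∑ i, w i :=
        Finset.sum_le_sum_of_subset_of_nonneg (Finset.subset_univ _) (fun i _ _ => h0 i)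
      have hcards : (m : ℝ) + 1 ≤ (supp.card : ℝ) := by exact_mod_cast hcard
      have : ((supp \ frac).card : ℝ) = (supp.card : ℝ) - (frac.card : ℝ) := by
        rw [hcardsd]
        have := Finset.card_le_card hfs
        push_cast [Nat.cast_sub this]
        ring
      linarith
    obtain ⟨i, hi, j, hj, hij⟩ := Finset.one_lt_card.mp h2
    simp only [hfracdef, Finset.mem_filter, Finset.mem_univ, true_and] at hi hj
    -- perturbation amounts
    set tp := min (1 - w i) (w j) with htp
    set tm := min (w i) (1 - w j) with htm
    have htp0 : 0 < tp := lt_min (by linarith [hi.2]) hj.1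
    have htm0 : 0 < tm := lt_min hi.1 (by linarith [hj.2])
    set up := Function.update (Function.update w i (w i + tp)) j (w j - tp) with hup
    set um := Function.update (Function.update w i (w i - tm)) j (w j + tm) with hum
    have hupi : up i = w i + tp := by
      rw [hup, Function.update_of_ne hij, Function.update_self]
    have hupj : up j = w j - tp := by rw [hup, Function.update_self]
    have hupo : ∀ r, r ≠ i → r ≠ j → up r = w r := by
      intro r hri hrj
      rw [hup, Function.update_of_ne hrj, Function.update_of_ne hri]
    have humi : um i = w i - tm := by
      rw [hum, Function.update_of_ne hij, Function.update_self]
    have humj : um j = w j + tm := by rw [hum, Function.update_self]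
    have humo : ∀ r, r ≠ i → r ≠ j → um r = w r := by
      intro r hri hrj
      rw [hum, Function.update_of_ne hrj, Function.update_of_ne hri]
    -- (continuation)
    have key : ∀ u : Fin n → ℝ, (∀ r, 0 ≤ u r) → (∀ r, u r ≤ 1) → (∑ r, u r) ≤ m →
        (Finset.univ.filter fun r => 0 < u r ∧ u r < 1) ⊆ frac →
        (∃ r ∈ frac, r ∉ (Finset.univ.filter fun r => 0 < u r ∧ u r < 1)) →
        u ∈ convexHull ℝ {u : Fin n → ℝ | (∀ i, 0 ≤ u i ∧ u i ≤ 1) ∧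
          (Finset.univ.filter fun i => u i ≠ 0).card ≤ m} := by
      intro u hu0 hu1 husum hsubf hmiss
      apply ih u _ hu0 hu1 husum
      obtain ⟨r, hr, hnr⟩ := hmiss
      have : (Finset.univ.filter fun r => 0 < u r ∧ u r < 1) ⊂ frac :=
        Finset.ssubset_iff_of_subset hsubf |>.mpr ⟨r, hr, hnr⟩
      have := Finset.card_lt_card this
      omega
    -- sums
    have himem : i ∈ Finset.univ \ {j} := by
      simp [hij]
    have hwsum : ∑ r, w r = w j + (w i + ∑ x ∈ (Finset.univ \ {j}) \ {i}, w x) := by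
      rw [Finset.sum_eq_sum_sdiff_singleton_add (Finset.mem_univ j) w,
        Finset.sum_eq_sum_sdiff_singleton_add himem w]
      ring
    have hsumup : ∑ r, up r = ∑ r, w r := by
      rw [hup, Finset.sum_update_of_mem (Finset.mem_univ j),
        Finset.sum_update_of_mem himem, hwsum]
      ring
    have hsumum : ∑ r, um r = ∑ r, w r := by
      rw [hum, Finset.sum_update_of_mem (Finset.mem_univ j),
        Finset.sum_update_of_mem himem, hwsum]
      ring
    have htple : tp ≤ 1 - w i := min_le_left _ _
    have htple' : tp ≤ w j := min_le_right _ _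
    have htmle : tm ≤ w i := min_le_left _ _
    have htmle' : tm ≤ 1 - w j := min_le_right _ _
    -- bounds
    have hup0 : ∀ r, 0 ≤ up r := by
      intro r
      by_cases hri : r = i
      · subst hri; rw [hupi]; linarith [hi.1]
      by_cases hrj : r = j
      · subst hrj; rw [hupj]; linarith
      · rw [hupo r hri hrj]; exact h0 r
    have hup1 : ∀ r, up r ≤ 1 := by
      intro r
      by_cases hri : r = i
      · subst hri; rw [hupi]; linarith
      by_cases hrj : r = j
      · subst hrj; rw [hupj]; linarith [hj.2]
      · rw [hupo r hri hrj]; exact h1 r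
    have hum0 : ∀ r, 0 ≤ um r := by
      intro r
      by_cases hri : r = i
      · subst hri; rw [humi]; linarith
      by_cases hrj : r = j
      · subst hrj; rw [humj]; linarith [hj.1]
      · rw [humo r hri hrj]; exact h0 r
    have hum1 : ∀ r, um r ≤ 1 := by
      intro r
      by_cases hri : r = i
      · subst hri; rw [humi]; linarith [hi.2]
      by_cases hrj : r = j
      · subst hrj; rw [humj]; linarith
      · rw [humo r hri hrj]; exact h1 r
    -- fractional subset
    have hfs_up : (Finset.univ.filter fun r => 0 < up r ∧ up r < 1) ⊆ frac := by
      intro r hr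
      simp only [Finset.mem_filter, Finset.mem_univ, true_and] at hr
      simp only [hfracdef, Finset.mem_filter, Finset.mem_univ, true_and]
      by_cases hri : r = i
      · subst hri; rw [hupi] at hr; exact ⟨by linarith [hr.1, htp0], by linarith [hr.2, htp0]⟩
      by_cases hrj : r = j
      · subst hrj; rw [hupj] at hr; exact ⟨by linarith [hr.1, htp0], by linarith [hr.2, htp0]⟩
      · rw [hupo r hri hrj] at hr; exact hr
    have hfs_um : (Finset.univ.filter fun r => 0 < um r ∧ um r < 1) ⊆ frac := by
      intro r hr
      simp only [Finset.mem_filter, Finset.mem_univ, true_and] at hr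
      simp only [hfracdef, Finset.mem_filter, Finset.mem_univ, true_and]
      by_cases hri : r = i
      · subst hri; rw [humi] at hr; exact ⟨by linarith [hr.1, htm0], by linarith [hr.2, htm0]⟩
      by_cases hrj : r = j
      · subst hrj; rw [humj] at hr; exact ⟨by linarith [hr.1, htm0], by linarith [hr.2, htm0]⟩
      · rw [humo r hri hrj] at hr; exact hr
    have hifrac : i ∈ frac := by
      simp only [hfracdef, Finset.mem_filter, Finset.mem_univ, true_and]; exact hi
    have hjfrac : j ∈ frac := by
      simp only [hfracdef, Finset.mem_filter, Finset.mem_univ, true_and]; exact hj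
    have hmiss_up : ∃ r ∈ frac, r ∉ (Finset.univ.filter fun r => 0 < up r ∧ up r < 1) := by
      rcases min_cases (1 - w i) (w j) with ⟨heq, _⟩ | ⟨heq, _⟩
      · refine ⟨i, hifrac, ?_⟩
        simp only [Finset.mem_filter, Finset.mem_univ, true_and, hupi]
        rw [htp, heq]; intro hcon; linarith [hcon.2]
      · refine ⟨j, hjfrac, ?_⟩
        simp only [Finset.mem_filter, Finset.mem_univ, true_and, hupj]
        rw [htp, heq]; intro hcon; linarith [hcon.1]
    have hmiss_um : ∃ r ∈ frac, r ∉ (Finset.univ.filter fun r => 0 < um r ∧ um r < 1) := by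
      rcases min_cases (w i) (1 - w j) with ⟨heq, _⟩ | ⟨heq, _⟩
      · refine ⟨i, hifrac, ?_⟩
        simp only [Finset.mem_filter, Finset.mem_univ, true_and, humi]
        rw [htm, heq]; intro hcon; linarith [hcon.1]
      · refine ⟨j, hjfrac, ?_⟩
        simp only [Finset.mem_filter, Finset.mem_univ, true_and, humj]
        rw [htm, heq]; intro hcon; linarith [hcon.2]
    have hupmem := key up hup0 hup1 (by rw [hsumup]; exact hsum) hfs_up hmiss_up
    have hummem := key um hum0 hum1 (by rw [hsumum]; exact hsum) hfs_um hmiss_um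
    -- convex combination
    have hts : 0 < tp + tm := by linarith
    have hcomb : w = (tm / (tp + tm)) • up + (tp / (tp + tm)) • um := by
      funext r
      simp only [Pi.add_apply, Pi.smul_apply, smul_eq_mul]
      by_cases hri : r = i
      · subst hri; rw [hupi, humi]; field_simp; ring
      by_cases hrj : r = j
      · subst hrj; rw [hupj, humj]; field_simp; ring
      · rw [hupo r hri hrj, humo r hri hrj]; field_simp; ring
    rw [hcomb]
    exact (convex_convexHull ℝ _) hupmem hummem
      (by positivity) (by positivity) (by field_simp; ring)

lemma lemB (n k : ℕ) (hkn : k ≤ n) (x : Fin n → ℝ) :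
    ∃ A : Finset (Fin n), A.card = k ∧ ∀ i ∉ A, ∀ j ∈ A, |x i| ≤ |x j| := by
  have hne : (Finset.powersetCard k (Finset.univ : Finset (Fin n))).Nonempty := by
    rw [Finset.powersetCard_nonempty]
    simpa using hkn
  obtain ⟨A, hAmem, hAmax⟩ := Finset.exists_max_image _ (fun B => ∑ i ∈ B, |x i|) hne
  rw [Finset.mem_powersetCard] at hAmem
  refine ⟨A, hAmem.2, ?_⟩
  intro i hi j hj
  by_contra hlt
  push_neg at hlt
  set B := insert i (A.erase j) with hB
  have hiB : i ∉ A.erase j := fun h => hi (Finset.mem_of_mem_erase h)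
  have hBcard : B.card = k := by
    rw [hB, Finset.card_insert_of_notMem hiB, Finset.card_erase_of_mem hj, hAmem.2]
    have : 1 ≤ k := by
      rw [← hAmem.2]
      exact Finset.card_pos.mpr ⟨j, hj⟩
    omega
  have hBmem : B ∈ Finset.powersetCard k (Finset.univ : Finset (Fin n)) := by
    rw [Finset.mem_powersetCard]
    exact ⟨Finset.subset_univ _, hBcard⟩
  have hsum : ∑ i ∈ B, |x i| = |x i| + (∑ i ∈ A, |x i| - |x j|) := by
    rw [hB, Finset.sum_insert hiB, ← Finset.add_sum_erase _ _ hj]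
    ring
  have := hAmax B hBmem
  rw [hsum] at this
  linarith

lemma scalar_ineq (k : ℕ) (hk : 1 ≤ k) (b c l : ℝ) (hb0 : 0 ≤ b) (hb1 : b ≤ 1)
    (hbl : b ^ 2 ≤ l) (hc : c ≤ max ((k : ℝ) / ((k : ℝ) + 1)) (1 - l / Real.sqrt k)) :
    b + c ≤ 1 + Real.sqrt ((k : ℝ) / ((k : ℝ) + 1)) := by
  set K := (k : ℝ) with hKdef
  have hK1 : 1 ≤ K := by rw [hKdef]; exact_mod_cast hk
  have hK0 : (0 : ℝ) < K := by linarith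
  have hK10 : (0 : ℝ) < K + 1 := by linarith
  set s := Real.sqrt (K / (K + 1)) with hs
  clear_value K
  clear_value s
  have hr0 : (0 : ℝ) ≤ K / (K + 1) := by positivity
  have hr1 : K / (K + 1) ≤ 1 := by rw [div_le_one hK10]; linarith
  have hs2 : s ^ 2 = K / (K + 1) := by rw [hs]; exact Real.sq_sqrt hr0
  have hs1 : s ≤ 1 := by
    rw [hs]; exact Real.sqrt_le_one.mpr hr1
  have hs0 : (0 : ℝ) ≤ s := by rw [hs]; exact Real.sqrt_nonneg _
  have hrs : K / (K + 1) ≤ s := by nlinarith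
  have hsK : (0 : ℝ) < Real.sqrt K := Real.sqrt_pos.mpr hK0
  rcases max_cases (K / (K + 1)) (1 - l / Real.sqrt K) with ⟨hmax, _⟩ | ⟨hmax, _⟩
  · rw [hmax] at hc; linarith
  · rw [hmax] at hc
    have hl0 : (0 : ℝ) ≤ l := le_trans (sq_nonneg b) hbl
    rcases le_or_gt l (K / (K + 1)) with hll | hll
    · have hbs : b ≤ s := by nlinarith
      have : (0 : ℝ) ≤ l / Real.sqrt K := by positivity
      linarith
    · have h3 : 1 ≤ Real.sqrt (K / (K + 1)) + (K / (K + 1)) / Real.sqrt K := by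
        obtain ⟨a, ha0, ha2⟩ : ∃ a : ℝ, 0 < a ∧ a ^ 2 = K :=
          ⟨Real.sqrt K, Real.sqrt_pos.mpr hK0, Real.sq_sqrt hK0.le⟩
        obtain ⟨t, ht0, ht2⟩ : ∃ t : ℝ, 0 < t ∧ t ^ 2 = K + 1 :=
          ⟨Real.sqrt (K + 1), Real.sqrt_pos.mpr hK10, Real.sq_sqrt hK10.le⟩
        have hsa : Real.sqrt K = a := by rw [← ha2, Real.sqrt_sq ha0.le]
        have hst : Real.sqrt (K + 1) = t := by rw [← ht2, Real.sqrt_sq ht0.le]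
        have hat : a ≤ t := by nlinarith
        have ha1 : 1 ≤ a := by nlinarith
        rw [Real.sqrt_div hK0.le, hsa, hst, ← ht2, ← ha2]
        have e1 : a / t + (a ^ 2 / t ^ 2) / a = (a * t + a) / t ^ 2 := by
          field_simp
        rw [e1, le_div_iff₀ (by positivity)]
        nlinarith
      rw [← hs] at h3
      have hmono : (K / (K + 1)) / Real.sqrt K ≤ l / Real.sqrt K := by
        gcongr
      linarith

set_option maxHeartbeats 1000000 in
theorem stmt3 (n k : ℕ) (hk1 : 1 ≤ k) (hkn : k ≤ n) :
    {x : Fin n → ℝ | Real.sqrt (∑ i, x i ^ 2) ≤ 1 ∧ (∑ i, |x i|) ≤ Real.sqrt k} ⊆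
    (1 + Real.sqrt ((k : ℝ) / (k + 1))) •
      convexHull ℝ {x : Fin n → ℝ | Real.sqrt (∑ i, x i ^ 2) ≤ 1 ∧
        (Finset.univ.filter fun i => x i ≠ 0).card ≤ k} := by
  intro x hx
  obtain ⟨hx2, hx1⟩ := hx
  set S := {x : Fin n → ℝ | Real.sqrt (∑ i, x i ^ 2) ≤ 1 ∧
      (Finset.univ.filter fun i => x i ≠ 0).card ≤ k} with hS
  set C := convexHull ℝ S with hC
  have hCconv : Convex ℝ C := convex_convexHull ℝ S
  have h0C : (0 : Fin n → ℝ) ∈ C := by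
    apply subset_convexHull
    constructor
    · simp
    · simp
  set K := (k : ℝ) with hK
  have hK0 : (0 : ℝ) < K := by rw [hK]; exact_mod_cast hk1
  have hsqK : (0 : ℝ) < Real.sqrt K := Real.sqrt_pos.mpr hK0
  have hmulK : Real.sqrt K * Real.sqrt K = K := Real.mul_self_sqrt hK0.le
  set ρ := 1 + Real.sqrt (K / (K + 1)) with hρ
  have hρ1 : 1 ≤ ρ := by
    rw [hρ]
    linarith [Real.sqrt_nonneg (K / (K + 1))]
  have main : ∀ bc : ℝ, 0 ≤ bc → bc ≤ ρ → x ∈ bc • C → x ∈ ρ • C := by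
    intro bc h0 hle hmem
    have hρeq : ρ = bc + (ρ - bc) := by ring
    rw [hρeq, hCconv.add_smul h0 (by linarith)]
    have h00 : (0 : Fin n → ℝ) ∈ (ρ - bc) • C := by
      simpa using Set.smul_mem_smul_set (a := ρ - bc) h0C
    simpa using Set.add_mem_add hmem h00
  have hsum2 : ∑ i, x i ^ 2 ≤ 1 := by
    have h0 : (0:ℝ) ≤ ∑ i, x i ^ 2 := by positivity
    calc ∑ i, x i ^ 2 = Real.sqrt (∑ i, x i ^ 2) ^ 2 := (Real.sq_sqrt h0).symm
      _ ≤ 1 ^ 2 := pow_le_pow_left₀ (Real.sqrt_nonneg _) hx2 2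
      _ = 1 := one_pow 2
  have habs1 : ∀ i, |x i| ≤ 1 := by
    intro i
    have h1 : x i ^ 2 ≤ 1 :=
      le_trans (Finset.single_le_sum (fun j _ => sq_nonneg (x j)) (Finset.mem_univ i)) hsum2
    rw [← Real.sqrt_one, ← Real.sqrt_sq_eq_abs]
    exact Real.sqrt_le_sqrt h1
  obtain ⟨A, hAcard, hAmax⟩ := lemB n k hkn x
  set y : Fin n → ℝ := fun i => if i ∈ A then x i else 0 with hy
  set z : Fin n → ℝ := fun i => if i ∈ A then 0 else x i with hz
  have hxyz : x = y + z := by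
    funext i
    by_cases hiA : i ∈ A <;> simp [hy, hz, hiA]
  set b := Real.sqrt (∑ i ∈ A, x i ^ 2) with hb
  have hb0 : 0 ≤ b := Real.sqrt_nonneg _
  have hbA : ∑ i ∈ A, x i ^ 2 ≤ 1 :=
    le_trans (Finset.sum_le_sum_of_subset_of_nonneg (Finset.subset_univ A)
      fun i _ _ => sq_nonneg _) hsum2
  have hb1 : b ≤ 1 := by rw [hb]; exact Real.sqrt_le_one.mpr hbA
  have hysum : ∑ i, y i ^ 2 = ∑ i ∈ A, x i ^ 2 := by
    rw [hy]
    have he : ∀ i, (if i ∈ A then x i else 0) ^ 2 = if i ∈ A then x i ^ 2 else 0 := by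
      intro i; split_ifs <;> simp
    simp only [he]
    rw [Finset.sum_ite_mem, Finset.univ_inter]
  have hyC : y ∈ b • C := by
    by_cases hbz : b = 0
    · have hsum0 : ∑ i ∈ A, x i ^ 2 = 0 := by
        have h := Real.sqrt_eq_zero'.mp (hb ▸ hbz)
        have : (0:ℝ) ≤ ∑ i ∈ A, x i ^ 2 := Finset.sum_nonneg fun i _ => sq_nonneg _
        linarith
      have hA0 : ∀ i ∈ A, x i = 0 := by
        intro i hi
        have := (Finset.sum_eq_zero_iff_of_nonneg fun i _ => sq_nonneg (x i)).mp hsum0 i hi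
        exact pow_eq_zero_iff (by norm_num) |>.mp this
      have hyz : y = b • (0 : Fin n → ℝ) := by
        rw [smul_zero]
        funext i
        by_cases hiA : i ∈ A <;> simp [hy, hiA]
        exact hA0 i hiA
      rw [hyz]
      exact Set.smul_mem_smul_set h0C
    · have hbpos : 0 < b := lt_of_le_of_ne hb0 (Ne.symm hbz)
      have hmem : b⁻¹ • y ∈ S := by
        refine ⟨?_, ?_⟩
        · show Real.sqrt (∑ i, (b⁻¹ • y) i ^ 2) ≤ 1
          have hcalc : ∑ i, (b⁻¹ • y) i ^ 2 = b⁻¹ ^ 2 * ∑ i ∈ A, x i ^ 2 := by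
            rw [← hysum, Finset.mul_sum]
            apply Finset.sum_congr rfl
            intro i _
            simp [mul_pow]
          rw [hcalc, Real.sqrt_mul (by positivity), Real.sqrt_sq (by positivity), ← hb,
            inv_mul_cancel₀ hbz]
        · show (Finset.univ.filter fun i => (b⁻¹ • y) i ≠ 0).card ≤ k
          have hsub : (Finset.univ.filter fun i => (b⁻¹ • y) i ≠ 0) ⊆ A := by
            intro i hi
            simp only [Finset.mem_filter, Finset.mem_univ, true_and, Pi.smul_apply,
              smul_eq_mul, hy] at hi
            by_contra hiA
            simp [hiA] at hi
          calc (Finset.univ.filter fun i => (b⁻¹ • y) i ≠ 0).card ≤ A.card :=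
                Finset.card_le_card hsub
            _ = k := hAcard
      have hyeq : y = b • (b⁻¹ • y) := by
        rw [smul_smul, mul_inv_cancel₀ hbz, one_smul]
      rw [hyeq]
      exact Set.smul_mem_smul_set (subset_convexHull ℝ S hmem)
  by_cases hz0 : z = 0
  · apply main b hb0 (le_trans hb1 hρ1)
    rw [hxyz, hz0, add_zero]
    exact hyC
  · obtain ⟨i0, hi0⟩ := Function.ne_iff.mp hz0
    have hi0A : i0 ∉ A := by
      intro h
      apply hi0
      simp [hz, h]
    have hzx : z i0 = x i0 := by simp [hz, hi0A]
    have hx0 : x i0 ≠ 0 := by rw [← hzx]; simpa using hi0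
    have hcne : (Aᶜ : Finset (Fin n)).Nonempty := ⟨i0, Finset.mem_compl.mpr hi0A⟩
    set μ := Aᶜ.sup' hcne fun i => |x i| with hμ
    set L := ∑ i ∈ Aᶜ, |x i| with hL
    set ℓ := ∑ i ∈ A, |x i| with hℓ
    have hℓ0 : 0 ≤ ℓ := Finset.sum_nonneg fun i _ => abs_nonneg _
    have hL0 : 0 ≤ L := Finset.sum_nonneg fun i _ => abs_nonneg _
    obtain ⟨i1, hi1mem, hi1⟩ := Finset.exists_mem_eq_sup' hcne fun i => |x i|
    have hμup : ∀ i ∉ A, |x i| ≤ μ := by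
      intro i hiA
      rw [hμ]
      exact Finset.le_sup' (fun i => |x i|) (Finset.mem_compl.mpr hiA)
    have hμpos : 0 < μ := lt_of_lt_of_le (abs_pos.mpr hx0) (hμup i0 hi0A)
    have hμL : μ ≤ L := by
      rw [hμ, hi1, hL]
      exact Finset.single_le_sum (fun i _ => abs_nonneg (x i)) hi1mem
    have hkμℓ : K * μ ≤ ℓ := by
      have hall : ∀ j ∈ A, μ ≤ |x j| := by
        intro j hj
        rw [hμ, hi1]
        exact hAmax i1 (Finset.mem_compl.mp hi1mem) j hj
      calc K * μ = ∑ _j ∈ A, μ := by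
            rw [Finset.sum_const, hAcard, nsmul_eq_mul, hK]
        _ ≤ ℓ := Finset.sum_le_sum hall
    have hℓL : ℓ + L ≤ Real.sqrt K := by
      rw [hℓ, hL, Finset.sum_add_sum_compl]
      exact hx1
    have hzabs : ∀ i, |z i| ≤ μ := by
      intro i
      by_cases hiA : i ∈ A
      · have : z i = 0 := by simp [hz, hiA]
        rw [this]
        simpa using hμpos.le
      · have hzi : z i = x i := by simp [hz, hiA]
        rw [hzi]
        exact hμup i hiA
    have hzsum : ∑ i, |z i| = L := by
      rw [← Finset.sum_add_sum_compl A fun i => |z i|]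
      have e1 : ∑ i ∈ A, |z i| = 0 := by
        apply Finset.sum_eq_zero
        intro i hi
        simp [hz, hi]
      have e2 : ∑ i ∈ Aᶜ, |z i| = L := by
        rw [hL]
        apply Finset.sum_congr rfl
        intro i hi
        have : i ∉ A := Finset.mem_compl.mp hi
        simp [hz, this]
      rw [e1, e2, zero_add]
    have hbℓ : b ^ 2 ≤ ℓ := by
      have hbsq : b ^ 2 = ∑ i ∈ A, x i ^ 2 := by
        rw [hb]
        exact Real.sq_sqrt (Finset.sum_nonneg fun i _ => sq_nonneg _)
      have hterm : ∀ i ∈ A, x i ^ 2 ≤ |x i| := by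
        intro i _
        calc x i ^ 2 = |x i| ^ 2 := (sq_abs (x i)).symm
          _ = |x i| * |x i| := by ring
          _ ≤ |x i| * 1 := mul_le_mul_of_nonneg_left (habs1 i) (abs_nonneg _)
          _ = |x i| := mul_one _
      calc b ^ 2 = ∑ i ∈ A, x i ^ 2 := hbsq
        _ ≤ ∑ i ∈ A, |x i| := Finset.sum_le_sum hterm
        _ ≤ ℓ := by
            rw [hℓ]
    clear_value μ L ℓ
    set μ' := max μ (L / K) with hμ'
    have hμ'pos : 0 < μ' := lt_of_lt_of_le hμpos (le_max_left _ _)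
    set c := Real.sqrt K * μ' with hc
    have hc0 : 0 ≤ c := by positivity
    have hcpos : 0 < c := mul_pos hsqK hμ'pos
    have h1 : Real.sqrt K * μ ≤ K / (K + 1) := by
      rw [le_div_iff₀ (by linarith)]
      have hμK1 : K * μ + μ ≤ Real.sqrt K := by linarith
      calc Real.sqrt K * μ * (K + 1) = Real.sqrt K * (K * μ + μ) := by ring
        _ ≤ Real.sqrt K * Real.sqrt K := by
            apply mul_le_mul_of_nonneg_left hμK1 hsqK.le
        _ = K := hmulK
    have h2 : Real.sqrt K * (L / K) = L / Real.sqrt K := by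
      rw [show Real.sqrt K * (L / K) = L * (Real.sqrt K / K) by ring, Real.sqrt_div_self']
      ring
    have h3 : L / Real.sqrt K ≤ 1 - ℓ / Real.sqrt K := by
      have hd : (ℓ + L) / Real.sqrt K ≤ 1 := (div_le_one hsqK).mpr hℓL
      rw [add_div] at hd
      linarith
    have hcmax : c ≤ max (K / (K + 1)) (1 - ℓ / Real.sqrt K) := by
      calc c = max (Real.sqrt K * μ) (Real.sqrt K * (L / K)) := by
            rw [hc, hμ', mul_max_of_nonneg _ _ hsqK.le]
        _ ≤ max (K / (K + 1)) (1 - ℓ / Real.sqrt K) := by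
            apply max_le_max h1
            rw [h2]
            exact h3
    have hbc : b + c ≤ ρ := by
      rw [hρ]
      exact scalar_ineq k hk1 b c ℓ hb0 hb1 hbℓ hcmax
    -- membership of z
    set σ : Fin n → ℝ := fun i => if x i < 0 then -1 else 1 with hσ
    set w : Fin n → ℝ := fun i => |z i| / μ' with hw
    have hw0 : ∀ i, 0 ≤ w i := by
      intro i
      rw [hw]
      positivity
    have hw1 : ∀ i, w i ≤ 1 := by
      intro i
      rw [hw]
      simp only
      rw [div_le_one hμ'pos]
      exact le_trans (hzabs i) (le_max_left _ _)
    have hwsum : ∑ i, w i ≤ (k : ℝ) := by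
      have he : ∑ i, w i = L / μ' := by
        rw [hw]
        simp only
        rw [← Finset.sum_div, hzsum]
      rw [he, div_le_iff₀ hμ'pos, ← hK]
      have hLK : L / K ≤ μ' := le_max_right _ _
      rw [div_le_iff₀ hK0] at hLK
      linarith
    have hwconv := lemA n k _ w le_rfl hw0 hw1 hwsum
    set f : (Fin n → ℝ) →ₗ[ℝ] (Fin n → ℝ) :=
      LinearMap.pi (fun i => (μ' * σ i) • LinearMap.proj i) with hf
    have hfapp : ∀ (u : Fin n → ℝ) i, f u i = (μ' * σ i) * u i := by
      intro u i
      rw [hf]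
      simp [LinearMap.pi_apply]
    have hfw : f w = z := by
      funext i
      rw [hfapp, hw]
      simp only
      rw [show μ' * σ i * (|z i| / μ') = σ i * |z i| from by field_simp]
      by_cases hiA : i ∈ A
      · have : z i = 0 := by simp [hz, hiA]
        simp [this]
      · have hzi : z i = x i := by simp [hz, hiA]
        rw [hzi]
        simp only [hσ]
        rcases lt_or_ge (x i) 0 with hneg | hpos
        · rw [if_pos hneg, abs_of_neg hneg]; ring
        · rw [if_neg (not_lt.mpr hpos), abs_of_nonneg hpos]; ring
    have hσsq : ∀ i, σ i ^ 2 = 1 := by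
      intro i
      simp only [hσ]
      split_ifs <;> norm_num
    have hc2 : c ^ 2 = K * μ' ^ 2 := by
      rw [hc, mul_pow, Real.sq_sqrt hK0.le]
    have himg : f '' {u : Fin n → ℝ | (∀ i, 0 ≤ u i ∧ u i ≤ 1) ∧
        (Finset.univ.filter fun i => u i ≠ 0).card ≤ k} ⊆ c • S := by
      rintro - ⟨u, ⟨hu01, hucard⟩, rfl⟩
      refine ⟨c⁻¹ • f u, ⟨?_, ?_⟩, ?_⟩
      rotate_left 2
      · show c • c⁻¹ • f u = f u
        rw [smul_smul, mul_inv_cancel₀ hcpos.ne', one_smul]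
      · show Real.sqrt (∑ i, (c⁻¹ • f u) i ^ 2) ≤ 1
        have hsum : ∑ i, (c⁻¹ • f u) i ^ 2 = (c⁻¹ * μ') ^ 2 * ∑ i, u i ^ 2 := by
          rw [Finset.mul_sum]
          apply Finset.sum_congr rfl
          intro i _
          have : (c⁻¹ • f u) i ^ 2 = (c⁻¹ * μ') ^ 2 * (σ i ^ 2 * u i ^ 2) := by
            rw [Pi.smul_apply, hfapp, smul_eq_mul]
            ring
          rw [this, hσsq i, one_mul]
        have husq : ∑ i, u i ^ 2 ≤ K := by
          have e1 : ∑ i, u i ^ 2 = ∑ i ∈ Finset.univ.filter (fun i => u i ≠ 0), u i ^ 2 := by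
            symm
            apply Finset.sum_subset (Finset.filter_subset _ _)
            intro i _ hni
            simp only [Finset.mem_filter, Finset.mem_univ, true_and, not_not] at hni
            simp [hni]
          have e2 : ∑ i ∈ Finset.univ.filter (fun i => u i ≠ 0), u i ^ 2 ≤
              ((Finset.univ.filter (fun i => u i ≠ 0)).card : ℝ) := by
            have h := Finset.sum_le_card_nsmul (Finset.univ.filter (fun i => u i ≠ 0))
              (fun i => u i ^ 2) 1 (fun i _ => by
                show u i ^ 2 ≤ 1
                exact pow_le_one₀ (hu01 i).1 (hu01 i).2)
            simpa using h
          have e3 : ((Finset.univ.filter (fun i => u i ≠ 0)).card : ℝ) ≤ K := by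
            rw [hK]; exact_mod_cast hucard
          rw [e1]; linarith
        have hkey : (c⁻¹ * μ') ^ 2 * K = 1 := by
          have hcne' : c ≠ 0 := hcpos.ne'
          field_simp
          rw [hc2]
          ring
        have hle1 : ∑ i, (c⁻¹ • f u) i ^ 2 ≤ 1 := by
          rw [hsum, ← hkey]
          gcongr
        calc Real.sqrt (∑ i, (c⁻¹ • f u) i ^ 2) ≤ Real.sqrt 1 := Real.sqrt_le_sqrt hle1
          _ = 1 := Real.sqrt_one
      · show (Finset.univ.filter fun i => (c⁻¹ • f u) i ≠ 0).card ≤ k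
        refine le_trans (Finset.card_le_card ?_) hucard
        intro i hi
        simp only [Finset.mem_filter, Finset.mem_univ, true_and] at *
        intro hui
        apply hi
        rw [Pi.smul_apply, hfapp, hui, mul_zero, smul_eq_mul, mul_zero]
    have hzc : z ∈ c • C := by
      have h1 : z ∈ f '' (convexHull ℝ {u : Fin n → ℝ | (∀ i, 0 ≤ u i ∧ u i ≤ 1) ∧
          (Finset.univ.filter fun i => u i ≠ 0).card ≤ k}) := ⟨w, hwconv, hfw⟩
      rw [f.image_convexHull] at h1
      have h2 := convexHull_mono himg h1
      rw [convexHull_smul] at h2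
      exact h2
    apply main (b + c) (add_nonneg hb0 hc0) hbc
    rw [hxyz, hCconv.add_smul hb0 hc0]
    exact Set.add_mem_add hyC hzc
end

section
/- Let x ∈ R^n with nonincreasing nonnegative entries x_1 ≥ x_2 ≥ ... ≥ x_n ≥ 0 and let k divide into blocks: I^1 = {1,...,k}, I^2 = {k+1,...,2k}, etc. If ||x||_2 ≤ 1 and ||x||_1 ≤ √k, then the sum of the Euclidean norms of the blocks, Σ_j ||x_{I^j}||_2, is at most 1 + √(k/(k+1)). -/
private lemma stmt4_final_aux (a b T c R : ℝ) (hc : 2 ≤ c) (hb1 : b ≤ 1) (hba : b ≤ a)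
    (hT : T ≤ 1 - a * (1 / c)) (hkey : 1 - 1 / c ≤ R) : b + T ≤ 1 + R := by
  have hc0 : (0 : ℝ) < c := by linarith
  have hv0 : (0 : ℝ) < 1 / c := by positivity
  have hv1 : 1 / c ≤ 1 / 2 := by
    rw [div_le_div_iff₀ hc0 (by norm_num)]; linarith
  rcases le_or_gt a 1 with h | h
  · have hprod : 0 ≤ (1 - a) * (1 - 1 / c) := mul_nonneg (by linarith) (by linarith)
    nlinarith
  · have hprod : 0 ≤ (a - 1) * (1 / c) := mul_nonneg (by linarith) hv0.le
    nlinarith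

theorem stmt4 (n k : ℕ) (hk : 0 < k) (x : Fin n → ℝ)
    (hmono : ∀ i j : Fin n, i ≤ j → x j ≤ x i) (hnn : ∀ i, 0 ≤ x i)
    (h2 : Real.sqrt (∑ i, x i ^ 2) ≤ 1) (h1 : (∑ i, |x i|) ≤ Real.sqrt k) :
    ∑ j ∈ Finset.range ((n + k - 1) / k),
      Real.sqrt (∑ i ∈ Finset.univ.filter
        (fun i : Fin n => k * j ≤ (i : ℕ) ∧ (i : ℕ) < k * (j + 1)), x i ^ 2)
      ≤ 1 + Real.sqrt ((k : ℝ) / (k + 1)) := by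
  classical
  set J := (n + k - 1) / k with hJdef
  set y : ℕ → ℝ := fun m => if h : m < n then x ⟨m, h⟩ else 0 with hy
  have hyx : ∀ i : Fin n, y (i : ℕ) = x i := by
    intro i; simp only [hy, i.isLt, dif_pos, Fin.eta]
  have ynn : ∀ m, 0 ≤ y m := by
    intro m
    by_cases h : m < n
    · simp only [hy, dif_pos h]; exact hnn _
    · simp only [hy, dif_neg h]; exact le_refl _
  have ymono : ∀ a b : ℕ, a ≤ b → y b ≤ y a := by
    intro a b hab
    by_cases hb : b < n
    · have ha : a < n := lt_of_le_of_lt hab hb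
      simp only [hy, dif_pos hb, dif_pos ha]
      exact hmono ⟨a, ha⟩ ⟨b, hb⟩ hab
    · have : y b = 0 := by simp only [hy, dif_neg hb]
      rw [this]; exact ynn a
  set s : ℕ → ℝ := fun j => ∑ m ∈ Finset.Ico (k * j) (k * (j + 1)), y m with hs
  set q : ℕ → ℝ := fun j => ∑ m ∈ Finset.Ico (k * j) (k * (j + 1)), y m ^ 2 with hqdef
  have snn : ∀ j, 0 ≤ s j := fun j => Finset.sum_nonneg fun m _ => ynn m
  have qnn : ∀ j, 0 ≤ q j := fun j => Finset.sum_nonneg fun m _ => sq_nonneg _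
  -- conversion of block sums
  have hq : ∀ j : ℕ, (∑ i ∈ Finset.univ.filter
      (fun i : Fin n => k * j ≤ (i : ℕ) ∧ (i : ℕ) < k * (j + 1)), x i ^ 2) = q j := by
    intro j
    rw [Finset.sum_filter]
    have e1 : (∑ i : Fin n, if k * j ≤ (i : ℕ) ∧ (i : ℕ) < k * (j + 1) then x i ^ 2 else 0)
        = ∑ i : Fin n, (fun m : ℕ => if k * j ≤ m ∧ m < k * (j + 1) then y m ^ 2 else 0) (i : ℕ) := by
      apply Finset.sum_congr rfl
      intro i _
      simp only [hyx]
    rw [e1, Fin.sum_univ_eq_sum_range (fun m : ℕ => if k * j ≤ m ∧ m < k * (j + 1) then y m ^ 2 else 0) n, ← Finset.sum_filter]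
    have e2 : (Finset.range n).filter (fun m => k * j ≤ m ∧ m < k * (j + 1))
        = (Finset.Ico (k * j) (k * (j + 1))).filter (fun m => m < n) := by
      ext m
      simp only [Finset.mem_filter, Finset.mem_range, Finset.mem_Ico]
      tauto
    rw [e2, hqdef]
    apply Finset.sum_subset (Finset.filter_subset _ _)
    intro m _ hm2
    have hmn : ¬ m < n := by
      intro h
      exact hm2 (Finset.mem_filter.mpr ⟨‹m ∈ _›, h⟩)
    have : y m = 0 := by simp only [hy, dif_neg hmn]
    rw [this]; ring
  -- ℓ1 and ℓ2 conversions
  have hl1 : (∑ i, |x i|) = ∑ m ∈ Finset.range n, y m := by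
    rw [← Fin.sum_univ_eq_sum_range (fun m => y m) n]
    apply Finset.sum_congr rfl
    intro i _
    rw [hyx, abs_of_nonneg (hnn i)]
  have hl2 : (∑ i, x i ^ 2) = ∑ m ∈ Finset.range n, y m ^ 2 := by
    rw [← Fin.sum_univ_eq_sum_range (fun m => y m ^ 2) n]
    apply Finset.sum_congr rfl
    intro i _
    rw [hyx]
  -- partition: sum of block sums
  have hpart : ∀ N : ℕ, ∑ j ∈ Finset.range N, s j = ∑ m ∈ Finset.range (k * N), y m := by
    intro N
    induction N with
    | zero => simp
    | succ N ih =>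
      rw [Finset.sum_range_succ, ih, Finset.range_eq_Ico, Finset.range_eq_Ico]
      exact Finset.sum_Ico_consecutive y (Nat.zero_le _) (Nat.mul_le_mul le_rfl (Nat.le_succ N))
  have hnkJ : n ≤ k * J ∧ k * J ≤ n + k - 1 ∨ n = 0 := by
    rcases Nat.eq_zero_or_pos n with h | h
    · right; exact h
    · left
      have h1 := Nat.div_add_mod (n + k - 1) k
      have h2 := Nat.mod_lt (n + k - 1) hk
      rw [hJdef]
      constructor <;> omega
  have hA : ∑ j ∈ Finset.range J, s j = ∑ i, |x i| := by
    rw [hpart, hl1]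
    rcases hnkJ with ⟨hn1, _⟩ | hn0
    · rw [Finset.range_eq_Ico, Finset.range_eq_Ico,
        ← Finset.sum_Ico_consecutive y (Nat.zero_le n) hn1]
      have : ∑ m ∈ Finset.Ico n (k * J), y m = 0 := by
        apply Finset.sum_eq_zero
        intro m hm
        have : ¬ m < n := by
          have := (Finset.mem_Ico.mp hm).1; omega
        simp only [hy, dif_neg this]
      rw [this, add_zero]
    · subst hn0
      simp only [Finset.range_zero, Finset.sum_empty]
      apply Finset.sum_eq_zero
      intro m _
      have : ¬ m < 0 := by omega
      simp only [hy, dif_neg this]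
  -- basic sqrt facts
  have hk1 : (1 : ℝ) ≤ (k : ℝ) := by exact_mod_cast hk
  have hsk1 : (1 : ℝ) ≤ Real.sqrt k := by
    rw [show (1 : ℝ) = Real.sqrt 1 by simp]
    exact Real.sqrt_le_sqrt hk1
  have hskpos : (0 : ℝ) < Real.sqrt k := by linarith
  -- key scalar inequality
  have key : 1 - 1 / (2 * Real.sqrt k) ≤ Real.sqrt ((k : ℝ) / (k + 1)) := by
    have h0 : (0 : ℝ) ≤ (k : ℝ) / (k + 1) := by positivity
    have hle1 : (k : ℝ) / (k + 1) ≤ 1 := by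
      rw [div_le_one (by linarith)]; linarith
    have hts : (k : ℝ) / (k + 1) ≤ Real.sqrt ((k : ℝ) / (k + 1)) := by
      nlinarith [Real.sq_sqrt h0, Real.sqrt_nonneg ((k : ℝ) / (k + 1))]
    have h2s : 2 * Real.sqrt k ≤ (k : ℝ) + 1 := by
      nlinarith [Real.sq_sqrt (show (0:ℝ) ≤ k by linarith)]
    have hinv : 1 / ((k : ℝ) + 1) ≤ 1 / (2 * Real.sqrt k) :=
      one_div_le_one_div_of_le (by linarith) h2s
    have hkk : (k : ℝ) / (k + 1) = 1 - 1 / (k + 1) := by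
      field_simp
      ring
    linarith [hts, hinv, hkk ▸ hts]
  -- tail block bound
  have tailb : ∀ j : ℕ, Real.sqrt (q (j + 1)) ≤ (s j + s (j + 1)) / (2 * Real.sqrt k) := by
    intro j
    have hcard : (Finset.Ico (k * j) (k * (j + 1))).card = k := by
      rw [Nat.card_Ico, Nat.mul_succ, Nat.add_sub_cancel_left]
    have hmb : ∀ m ∈ Finset.Ico (k * (j + 1)) (k * (j + 2)), (k : ℝ) * y m ≤ s j := by
      intro m hm
      have hm1 := (Finset.mem_Ico.mp hm).1
      calc (k : ℝ) * y m = ∑ _t ∈ Finset.Ico (k * j) (k * (j + 1)), y m := by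
            rw [Finset.sum_const, hcard, nsmul_eq_mul]
        _ ≤ s j := by
            apply Finset.sum_le_sum
            intro t ht
            apply ymono
            have := (Finset.mem_Ico.mp ht).2
            omega
    have hqk : (k : ℝ) * q (j + 1) ≤ s j * s (j + 1) := by
      have e3 : (k : ℝ) * q (j + 1) = ∑ m ∈ Finset.Ico (k * (j + 1)) (k * (j + 1 + 1)), (k : ℝ) * y m ^ 2 := by
        show (k:ℝ) * (∑ m ∈ Finset.Ico (k * (j + 1)) (k * (j + 1 + 1)), y m ^ 2) = _
        rw [Finset.mul_sum]
      have e4 : s j * s (j + 1) = ∑ m ∈ Finset.Ico (k * (j + 1)) (k * (j + 1 + 1)), s j * y m := by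
        show s j * (∑ m ∈ Finset.Ico (k * (j + 1)) (k * (j + 1 + 1)), y m) = _
        rw [Finset.mul_sum]
      rw [e3, e4]
      apply Finset.sum_le_sum
      intro m hm
      have h1m := hmb m (by
        have h2eq : k * (j + 2) = k * (j + 1 + 1) := by ring
        rw [h2eq]; exact hm)
      nlinarith [ynn m]
    have hs1 := snn j
    have hs2 := snn (j + 1)
    have h2k : (2 * Real.sqrt k) ^ 2 = 4 * (k : ℝ) := by
      rw [mul_pow, Real.sq_sqrt (show (0:ℝ) ≤ k by linarith)]; ring
    have hqle : q (j + 1) ≤ ((s j + s (j + 1)) / (2 * Real.sqrt k)) ^ 2 := by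
      rw [div_pow, h2k, le_div_iff₀ (by linarith)]
      nlinarith [sq_nonneg (s j - s (j + 1)), qnn (j + 1)]
    calc Real.sqrt (q (j + 1)) ≤ Real.sqrt (((s j + s (j + 1)) / (2 * Real.sqrt k)) ^ 2) :=
          Real.sqrt_le_sqrt hqle
      _ = (s j + s (j + 1)) / (2 * Real.sqrt k) := Real.sqrt_sq (by positivity)
  -- block 0 bounds
  have hsumsq : ∑ m ∈ Finset.range n, y m ^ 2 ≤ 1 := by
    rw [← hl2]
    have h0 : 0 ≤ ∑ i, x i ^ 2 := Finset.sum_nonneg fun i _ => sq_nonneg _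
    nlinarith [Real.sq_sqrt h0, Real.sqrt_nonneg (∑ i, x i ^ 2)]
  have q0le1 : Real.sqrt (q 0) ≤ 1 := by
    have hsub : q 0 ≤ ∑ m ∈ Finset.range n, y m ^ 2 := by
      show (∑ m ∈ Finset.Ico (k * 0) (k * (0 + 1)), y m ^ 2) ≤ _
      rw [← Finset.sum_subset (Finset.filter_subset (fun m => m < n) (Finset.Ico (k*0) (k*(0+1))))
        (by
          intro m _ hm2
          have hmn : ¬ m < n := fun h => hm2 (Finset.mem_filter.mpr ⟨‹m ∈ _›, h⟩)
          have : y m = 0 := by simp only [hy, dif_neg hmn]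
          rw [this]; ring)]
      apply Finset.sum_le_sum_of_subset_of_nonneg
      · intro m hm
        exact Finset.mem_range.mpr (Finset.mem_filter.mp hm).2
      · intro m _ _; exact sq_nonneg _
    calc Real.sqrt (q 0) ≤ Real.sqrt 1 := Real.sqrt_le_sqrt (le_trans hsub hsumsq)
      _ = 1 := Real.sqrt_one
  have q0les : Real.sqrt (q 0) ≤ s 0 := by
    have hqs : q 0 ≤ s 0 ^ 2 := by
      show (∑ m ∈ Finset.Ico (k * 0) (k * (0 + 1)), y m ^ 2) ≤ _
      rw [sq]
      rw [show s 0 * s 0 = ∑ m ∈ Finset.Ico (k * 0) (k * (0 + 1)), s 0 * y m by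
        rw [← Finset.mul_sum]]
      apply Finset.sum_le_sum
      intro m hm
      have hym : y m ≤ ∑ t ∈ Finset.Ico (k * 0) (k * (0 + 1)), y t :=
        Finset.single_le_sum (fun t _ => ynn t) hm
      nlinarith [ynn m]
    calc Real.sqrt (q 0) ≤ Real.sqrt (s 0 ^ 2) := Real.sqrt_le_sqrt hqs
      _ = s 0 := Real.sqrt_sq (snn 0)
  -- rewrite goal
  have hgoal : (∑ j ∈ Finset.range J,
      Real.sqrt (∑ i ∈ Finset.univ.filter
        (fun i : Fin n => k * j ≤ (i : ℕ) ∧ (i : ℕ) < k * (j + 1)), x i ^ 2))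
      = ∑ j ∈ Finset.range J, Real.sqrt (q j) :=
    Finset.sum_congr rfl fun j _ => by rw [hq j]
  rw [hgoal]
  rcases Nat.eq_zero_or_pos J with hJ0 | hJ1
  · rw [hJ0]
    simp only [Finset.range_zero, Finset.sum_empty]
    positivity
  -- split off block 0
  have hsplit : ∑ j ∈ Finset.range J, Real.sqrt (q j)
      = Real.sqrt (q 0) + ∑ j ∈ Finset.Ico 1 J, Real.sqrt (q j) := by
    rw [Finset.range_eq_Ico, ← Finset.sum_Ico_consecutive _ (Nat.zero_le 1) hJ1]
    congr 1
    rw [show Finset.Ico 0 1 = {0} from rfl, Finset.sum_singleton]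
  rw [hsplit]
  -- tail estimate
  have hIco : ∀ f : ℕ → ℝ, ∑ j ∈ Finset.Ico 1 J, f j = ∑ i ∈ Finset.range (J - 1), f (i + 1) := by
    intro f
    rw [Finset.sum_Ico_eq_sum_range]
    apply Finset.sum_congr rfl
    intro i _
    congr 1
    omega
  have htail : ∑ j ∈ Finset.Ico 1 J, Real.sqrt (q j)
      ≤ (2 * Real.sqrt k - s 0) / (2 * Real.sqrt k) := by
    have hAle : ∑ j ∈ Finset.range J, s j ≤ Real.sqrt k := by rw [hA]; exact h1
    have step1 : ∑ j ∈ Finset.Ico 1 J, Real.sqrt (q j)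
        ≤ ∑ i ∈ Finset.range (J - 1), (s i + s (i + 1)) / (2 * Real.sqrt k) := by
      rw [hIco (fun j => Real.sqrt (q j))]
      exact Finset.sum_le_sum fun i _ => tailb i
    have step2 : ∑ i ∈ Finset.range (J - 1), (s i + s (i + 1)) / (2 * Real.sqrt k)
        = ((∑ i ∈ Finset.range (J - 1), s i) + (∑ i ∈ Finset.range (J - 1), s (i + 1)))
          / (2 * Real.sqrt k) := by
      rw [← Finset.sum_add_distrib, Finset.sum_div]
    have hb1 : ∑ i ∈ Finset.range (J - 1), s i ≤ ∑ j ∈ Finset.range J, s j := by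
      apply Finset.sum_le_sum_of_subset_of_nonneg
      · exact Finset.range_subset_range.mpr (by omega)
      · intro i _ _; exact snn i
    have hb2 : ∑ i ∈ Finset.range (J - 1), s (i + 1) = (∑ j ∈ Finset.range J, s j) - s 0 := by
      rw [← hIco s]
      have : ∑ j ∈ Finset.range J, s j = s 0 + ∑ j ∈ Finset.Ico 1 J, s j := by
        rw [Finset.range_eq_Ico, ← Finset.sum_Ico_consecutive _ (Nat.zero_le 1) hJ1]
        congr 1
        rw [show Finset.Ico 0 1 = {0} from rfl, Finset.sum_singleton]
      rw [this]; ring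
    calc ∑ j ∈ Finset.Ico 1 J, Real.sqrt (q j)
        ≤ ((∑ i ∈ Finset.range (J - 1), s i) + (∑ i ∈ Finset.range (J - 1), s (i + 1)))
          / (2 * Real.sqrt k) := by rw [← step2]; exact step1
      _ ≤ (2 * Real.sqrt k - s 0) / (2 * Real.sqrt k) := by
          rw [div_le_div_iff_of_pos_right (show (0:ℝ) < 2 * Real.sqrt k by linarith)]
          rw [hb2]; linarith [hb1, hAle]
  -- final assembly
  have hc2 : (2 : ℝ) ≤ 2 * Real.sqrt k := by linarith
  have hs0c : (2 * Real.sqrt k - s 0) / (2 * Real.sqrt k) = 1 - s 0 * (1 / (2 * Real.sqrt k)) := by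
    field_simp
  have hv1 : 1 / (2 * Real.sqrt k) ≤ 1 / 2 := one_div_le_one_div_of_le (by norm_num) hc2
  have hv0 : 0 < 1 / (2 * Real.sqrt k) := by positivity
  rw [hs0c] at htail
  exact stmt4_final_aux (s 0) (Real.sqrt (q 0)) _ (2 * Real.sqrt k) _ hc2 q0le1 q0les htail key
end

section
/- Let x ∈ R^n and let i_1, ..., i_n order the coordinates so |x_{i_1}| ≥ ... ≥ |x_{i_n}|. Define v by v_{i_j} = |x_{i_j}| for j ≤ k and v_{i_j} = |x_{i_k}| for j > k, and set b = ||(v_{i_1},...,v_{i_k})||_2. Then for every y ∈ R^n with ||y||_2 ≤ 1 and ||y||_0 ≤ k, one has vᵀy ≤ b. -/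
open scoped Classical

lemma aux_le_apply {c n : ℕ} (f : Fin c → Fin n) (hf : StrictMono f) :
    ∀ (m : ℕ) (h : m < c), m ≤ (f ⟨m, h⟩ : ℕ) := by
  intro m
  induction m with
  | zero => intro h; exact Nat.zero_le _
  | succ m ih =>
    intro h
    have h' : m < c := Nat.lt_of_succ_lt h
    have := hf (show (⟨m, h'⟩ : Fin c) < ⟨m + 1, h⟩ by simp [Fin.lt_def])
    have := ih h'
    omega

lemma aux_sum_le {n k : ℕ} (f : Fin n → ℝ) (hf0 : ∀ i, 0 ≤ f i)
    (hanti : ∀ a b : Fin n, a ≤ b → f b ≤ f a)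
    (S : Finset (Fin n)) (hS : S.card ≤ k) :
    ∑ i ∈ S, f i ≤ ∑ i ∈ Finset.univ.filter (fun j : Fin n => (j : ℕ) < k), f i := by
  set c := S.card with hc
  have hck : c ≤ k := hS
  set e := S.orderEmbOfFin hc.symm with he
  have hSmap : S = Finset.univ.map e.toEmbedding := by
    apply (Finset.eq_of_subset_of_card_le ?_ ?_).symm
    · intro i hi
      simp only [Finset.mem_map, Finset.mem_univ, true_and] at hi
      obtain ⟨m, rfl⟩ := hi
      exact Finset.orderEmbOfFin_mem _ _ _
    · simp [← hc]
  rw [hSmap, Finset.sum_map]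
  have hmem : ∀ m : Fin c, (m : ℕ) < n := fun m =>
    lt_of_lt_of_le m.2 (hc ▸ (by simpa using S.card_le_univ))
  have key : ∀ m : Fin c, f (e m) ≤ f ⟨(m : ℕ), hmem m⟩ := by
    intro m
    apply hanti
    have := aux_le_apply _ e.strictMono m m.2
    simpa [Fin.le_def] using this
  calc ∑ m : Fin c, f (e.toEmbedding m)
      ≤ ∑ m : Fin c, f ⟨(m : ℕ), hmem m⟩ := Finset.sum_le_sum (fun m _ => key m)
    _ = ∑ i ∈ Finset.univ.filter (fun j : Fin n => (j : ℕ) < c), f i := by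
        refine Finset.sum_bij (fun m _ => ⟨(m : ℕ), hmem m⟩) ?_ ?_ ?_ ?_
        · intro m _; simp [m.2]
        · intro a _ b _ hab
          simpa [Fin.ext_iff] using congrArg Fin.val hab
        · intro i hi
          simp only [Finset.mem_filter, Finset.mem_univ, true_and] at hi
          exact ⟨⟨i, hi⟩, Finset.mem_univ _, by simp⟩
        · intro m _; rfl
    _ ≤ ∑ i ∈ Finset.univ.filter (fun j : Fin n => (j : ℕ) < k), f i := by
        apply Finset.sum_le_sum_of_subset_of_nonneg
        · intro i hi
          simp only [Finset.mem_filter, Finset.mem_univ, true_and] at hi ⊢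
          omega
        · intro i _ _; exact hf0 i

theorem stmt10 (n k : ℕ) (hk : 1 ≤ k) (hkn : k ≤ n)
    (x : Fin n → ℝ) (σ : Equiv.Perm (Fin n))
    (hsort : ∀ a b : Fin n, a ≤ b → |x (σ b)| ≤ |x (σ a)|)
    (v : Fin n → ℝ)
    (hv : ∀ j : Fin n, v (σ j) =
      if (j : ℕ) < k then |x (σ j)| else |x (σ ⟨k - 1, by omega⟩)|)
    (b : ℝ)
    (hb : b = Real.sqrt (∑ j ∈ Finset.univ.filter (fun j : Fin n => (j : ℕ) < k), v (σ j) ^ 2))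
    (y : Fin n → ℝ) (hy2 : Real.sqrt (∑ i, y i ^ 2) ≤ 1)
    (hy0 : (Finset.univ.filter fun i => y i ≠ 0).card ≤ k) :
    (∑ i, v i * y i) ≤ b := by
  have hb0 : 0 ≤ b := hb ▸ Real.sqrt_nonneg _
  set S : Finset (Fin n) := Finset.univ.filter (fun i => y i ≠ 0) with hSdef
  -- reduce sum to support
  have hsum : ∑ i, v i * y i = ∑ i ∈ S, v i * y i := by
    rw [hSdef]
    rw [Finset.sum_filter_of_ne]
    intro i _ h
    intro hy; apply h; rw [hy, mul_zero]
  -- properties of w = v ∘ σ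
  set w : Fin n → ℝ := fun j => v (σ j) with hwdef
  have hw0 : ∀ j, 0 ≤ w j := by
    intro j; rw [hwdef]; simp only; rw [hv j]; split <;> exact abs_nonneg _
  have hwanti : ∀ a c : Fin n, a ≤ c → w c ≤ w a := by
    intro a c hac
    simp only [hwdef, hv a, hv c]
    by_cases hck : (c : ℕ) < k
    · have hak : (a : ℕ) < k := lt_of_le_of_lt (by exact_mod_cast hac) hck
      rw [if_pos hck, if_pos hak]
      exact hsort a c hac
    · rw [if_neg hck]
      by_cases hak : (a : ℕ) < k
      · rw [if_pos hak]
        exact hsort a ⟨k - 1, by omega⟩ (by simp [Fin.le_def]; omega)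
      · rw [if_neg hak]
  -- the v² sum over support
  set T : Finset (Fin n) := S.image σ.symm with hTdef
  have hTcard : T.card ≤ k := by
    rw [hTdef, Finset.card_image_of_injective _ σ.symm.injective]; exact hy0
  have hTsum : ∑ j ∈ T, w j ^ 2 = ∑ i ∈ S, v i ^ 2 := by
    rw [hTdef, Finset.sum_image (fun a _ b _ h => σ.symm.injective h)]
    apply Finset.sum_congr rfl
    intro i _
    simp [hwdef]
  have hkey : ∑ i ∈ S, v i ^ 2 ≤ b ^ 2 := by
    rw [← hTsum]
    have := aux_sum_le (fun j => w j ^ 2) (fun j => sq_nonneg _)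
      (fun a c hac => pow_le_pow_left₀ (hw0 c) (hwanti a c hac) 2) T hTcard
    refine this.trans_eq ?_
    rw [hb, Real.sq_sqrt (Finset.sum_nonneg fun j _ => sq_nonneg _)]
  -- Cauchy-Schwarz
  rw [hsum]
  have hcs := Finset.sum_mul_sq_le_sq_mul_sq S v y
  have hyS : ∑ i ∈ S, y i ^ 2 ≤ 1 := by
    have h1 : ∑ i ∈ S, y i ^ 2 ≤ ∑ i, y i ^ 2 :=
      Finset.sum_le_sum_of_subset_of_nonneg (Finset.subset_univ S)
        (fun i _ _ => sq_nonneg _)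
    have h2 : ∑ i, y i ^ 2 ≤ 1 := by
      have hnn : (0:ℝ) ≤ ∑ i, y i ^ 2 := Finset.sum_nonneg fun i _ => sq_nonneg _
      nlinarith [Real.sq_sqrt hnn, Real.sqrt_nonneg (∑ i, y i ^ 2)]
    linarith
  have hbound : (∑ i ∈ S, v i * y i) ^ 2 ≤ b ^ 2 := by
    calc (∑ i ∈ S, v i * y i) ^ 2 ≤ (∑ i ∈ S, v i ^ 2) * ∑ i ∈ S, y i ^ 2 := hcs
      _ ≤ b ^ 2 * 1 := by
          apply mul_le_mul hkey hyS (Finset.sum_nonneg fun i _ => sq_nonneg _) (sq_nonneg b)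
      _ = b ^ 2 := mul_one _
  nlinarith [abs_nonneg (∑ i ∈ S, v i * y i), le_abs_self (∑ i ∈ S, v i * y i),
    sq_abs (∑ i ∈ S, v i * y i)]
end
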